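/- arXiv:2208.12728 — 6 statements merged into one kernel-verified Lean document; each statement's English description precedes it below -/
import Mathlib

section
/- Let Y be a Hilbert space, Φ ∈ L(Y), D ∈ L(U;Y). If for every y₀ ∈ Y the value sup over n ∈ ℕ⁺ of inf over sequences (uᵢ) ∈ l²(ℕ⁺;U) of the truncated cost Jₙ(u;y₀) = Σ_{i=1}^n (‖yᵢ‖² + ‖uᵢ‖²) is finite (where y_i = Φ y_{i-1} + D u_i), then the infinite-horizon cost J(u;y₀) = Σ_{i=1}^∞ (‖yᵢ‖² + ‖uᵢ‖²) attains a finite infimum over u ∈ l²(ℕ⁺;U), i.e., V(y₀) = inf_u J(u;y₀) < ∞ for all y₀ ∈ Y. Conversely, if V(y₀) < ∞ for all y₀, then the supremum over n of the truncated infima is finite. -/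
open scoped BigOperators

variable {Y U : Type*}

/-- Trajectory of the discrete system `y_{i+1} = Φ y_i + D u_{i+1}`, where `u i` denotes
the control `u_{i+1}`. -/
def discreteTraj [NormedAddCommGroup Y] [NormedSpace ℝ Y]
    [NormedAddCommGroup U] [NormedSpace ℝ U]
    (Φ : Y →L[ℝ] Y) (D : U →L[ℝ] Y) (y₀ : Y) (u : ℕ → U) : ℕ → Y
  | 0 => y₀
  | n + 1 => Φ (discreteTraj Φ D y₀ u n) + D (u n)


section Aux

variable [NormedAddCommGroup Y] [NormedSpace ℝ Y] [NormedAddCommGroup U] [NormedSpace ℝ U]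
variable (Φ : Y →L[ℝ] Y) (D : U →L[ℝ] Y)

lemma traj_zero : ∀ n, discreteTraj Φ D (0 : Y) (0 : ℕ → U) n = 0
  | 0 => rfl
  | n + 1 => by simp [discreteTraj, traj_zero n]

lemma traj_add (y y' : Y) (u u' : ℕ → U) :
    ∀ n, discreteTraj Φ D (y + y') (u + u') n
      = discreteTraj Φ D y u n + discreteTraj Φ D y' u' n
  | 0 => rfl
  | n + 1 => by
    simp [discreteTraj, traj_add y y' u u' n]
    abel

lemma traj_smul (a : ℝ) (y : Y) (u : ℕ → U) :
    ∀ n, discreteTraj Φ D (a • y) (a • u) n = a • discreteTraj Φ D y u n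
  | 0 => rfl
  | n + 1 => by
    simp [discreteTraj, traj_smul a y u n]

lemma traj_shift (y : Y) (u : ℕ → U) (m : ℕ) :
    ∀ i, discreteTraj Φ D y u (m + i)
      = discreteTraj Φ D (discreteTraj Φ D y u m) (fun j => u (m + j)) i
  | 0 => rfl
  | i + 1 => by
    show discreteTraj Φ D y u ((m + i) + 1) = _
    simp only [discreteTraj, traj_shift y u m i]

lemma norm_traj_ctrl_zero_le (y : Y) :
    ∀ n, ‖discreteTraj Φ D y (0 : ℕ → U) n‖ ≤ ‖Φ‖ ^ n * ‖y‖
  | 0 => by simp [discreteTraj]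
  | n + 1 => by
    have h := norm_traj_ctrl_zero_le y n
    calc ‖discreteTraj Φ D y (0 : ℕ → U) (n+1)‖
        = ‖Φ (discreteTraj Φ D y (0 : ℕ → U) n)‖ := by simp [discreteTraj]
      _ ≤ ‖Φ‖ * ‖discreteTraj Φ D y (0 : ℕ → U) n‖ := Φ.le_opNorm _
      _ ≤ ‖Φ‖ * (‖Φ‖ ^ n * ‖y‖) := by
          exact mul_le_mul_of_nonneg_left h (norm_nonneg Φ)
      _ = ‖Φ‖ ^ (n+1) * ‖y‖ := by ring

/-- Truncated cost. -/
noncomputable def trajCost (y : Y) (u : ℕ → U) (n : ℕ) : ℝ :=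
  ∑ i ∈ Finset.range n, (‖discreteTraj Φ D y u (i + 1)‖ ^ 2 + ‖u i‖ ^ 2)

lemma trajCost_nonneg (y : Y) (u : ℕ → U) (n : ℕ) : 0 ≤ trajCost Φ D y u n :=
  Finset.sum_nonneg fun i _ => by positivity

lemma trajCost_mono (y : Y) (u : ℕ → U) {m n : ℕ} (h : m ≤ n) :
    trajCost Φ D y u m ≤ trajCost Φ D y u n :=
  Finset.sum_le_sum_of_subset_of_nonneg (Finset.range_subset_range.2 h) (fun i _ _ => by positivity)

lemma trajCost_zero (n : ℕ) : trajCost Φ D (0 : Y) (0 : ℕ → U) n = 0 := by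
  unfold trajCost
  refine Finset.sum_eq_zero fun i _ => ?_
  simp [traj_zero]

lemma trajCost_smul (a : ℝ) (y : Y) (u : ℕ → U) (n : ℕ) :
    trajCost Φ D (a • y) (a • u) n = a ^ 2 * trajCost Φ D y u n := by
  unfold trajCost
  rw [Finset.mul_sum]
  refine Finset.sum_congr rfl fun i _ => ?_
  rw [traj_smul]
  have : ‖a • u i‖ = |a| * ‖u i‖ := by
    rw [norm_smul, Real.norm_eq_abs]
  have h2 : ‖a • discreteTraj Φ D y u (i+1)‖ = |a| * ‖discreteTraj Φ D y u (i+1)‖ := by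
    rw [norm_smul, Real.norm_eq_abs]
  have hu : (a • u) i = a • u i := rfl
  rw [hu, this, h2]
  rw [mul_pow, mul_pow, sq_abs]
  ring

end Aux

lemma sqrt_sum_sq_triangle {n : ℕ} (f g h : Fin n × Bool → ℝ)
    (hf : ∀ p, |f p| ≤ g p + h p) :
    Real.sqrt (∑ p, (f p) ^ 2) ≤ Real.sqrt (∑ p, (g p) ^ 2) + Real.sqrt (∑ p, (h p) ^ 2) := by
  set G := (WithLp.equiv 2 (Fin n × Bool → ℝ)).symm g with hG
  set H := (WithLp.equiv 2 (Fin n × Bool → ℝ)).symm h with hH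
  have normG : ‖G‖ = Real.sqrt (∑ p, (g p) ^ 2) := by
    rw [EuclideanSpace.norm_eq]
    congr 1
    exact Finset.sum_congr rfl fun p _ => by
      simp [hG, Real.norm_eq_abs, sq_abs]
  have normH : ‖H‖ = Real.sqrt (∑ p, (h p) ^ 2) := by
    rw [EuclideanSpace.norm_eq]
    congr 1
    exact Finset.sum_congr rfl fun p _ => by
      simp [hH, Real.norm_eq_abs, sq_abs]
  have step1 : Real.sqrt (∑ p, (f p) ^ 2) ≤ ‖G + H‖ := by
    rw [EuclideanSpace.norm_eq]
    apply Real.sqrt_le_sqrt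
    apply Finset.sum_le_sum
    intro p _
    have hnorm : ‖(G + H) p‖ = |g p + h p| := by
      simp [hG, hH, Real.norm_eq_abs]
    rw [hnorm]
    calc (f p) ^ 2 = |f p| ^ 2 := (sq_abs _).symm
      _ ≤ (g p + h p) ^ 2 := by
          apply pow_le_pow_left₀ (abs_nonneg _) (hf p)
      _ = |g p + h p| ^ 2 := (sq_abs _).symm
  calc Real.sqrt (∑ p, (f p) ^ 2) ≤ ‖G + H‖ := step1
    _ ≤ ‖G‖ + ‖H‖ := norm_add_le _ _
    _ = _ := by rw [normG, normH]

section Aux2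
variable [NormedAddCommGroup Y] [NormedSpace ℝ Y] [NormedAddCommGroup U] [NormedSpace ℝ U]
variable (Φ : Y →L[ℝ] Y) (D : U →L[ℝ] Y)

lemma trajCost_eq_sum_sq (y : Y) (u : ℕ → U) (n : ℕ) :
    trajCost Φ D y u n
      = ∑ p : Fin n × Bool,
          ((if p.2 then ‖discreteTraj Φ D y u (p.1 + 1)‖ else ‖u p.1‖) ^ 2) := by
  rw [Fintype.sum_prod_type]
  unfold trajCost
  rw [← Fin.sum_univ_eq_sum_range (fun i => ‖discreteTraj Φ D y u (i + 1)‖ ^ 2 + ‖u i‖ ^ 2) n]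
  refine Finset.sum_congr rfl fun i _ => ?_
  simp [Fintype.sum_bool]

lemma sqrt_trajCost_add (y y' : Y) (u u' : ℕ → U) (n : ℕ) :
    Real.sqrt (trajCost Φ D (y + y') (u + u') n)
      ≤ Real.sqrt (trajCost Φ D y u n) + Real.sqrt (trajCost Φ D y' u' n) := by
  rw [trajCost_eq_sum_sq, trajCost_eq_sum_sq, trajCost_eq_sum_sq]
  apply sqrt_sum_sq_triangle
  rintro ⟨i, b⟩
  cases b
  · simp only [Bool.false_eq_true, if_false]
    rw [abs_of_nonneg (norm_nonneg _)]
    exact norm_add_le _ _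
  · simp only [if_true]
    rw [abs_of_nonneg (norm_nonneg _), traj_add]
    exact norm_add_le _ _

end Aux2

section Semi
variable [NormedAddCommGroup Y] [NormedSpace ℝ Y] [NormedAddCommGroup U] [NormedSpace ℝ U]
variable (Φ : Y →L[ℝ] Y) (D : U →L[ℝ] Y)

/-- The value function of the truncated problem: square-root scale. -/
noncomputable def trajVal (n : ℕ) (y : Y) : ℝ :=
  ⨅ u : ℕ → U, Real.sqrt (trajCost Φ D y u n)

lemma trajVal_bddBelow (n : ℕ) (y : Y) :
    BddBelow (Set.range fun u : ℕ → U => Real.sqrt (trajCost Φ D y u n)) :=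
  ⟨0, by rintro _ ⟨u, rfl⟩; exact Real.sqrt_nonneg _⟩

lemma trajVal_nonneg (n : ℕ) (y : Y) : 0 ≤ trajVal Φ D n y :=
  le_ciInf fun u => Real.sqrt_nonneg _

lemma trajVal_le (n : ℕ) (y : Y) (u : ℕ → U) :
    trajVal Φ D n y ≤ Real.sqrt (trajCost Φ D y u n) :=
  ciInf_le (trajVal_bddBelow Φ D n y) u

lemma trajVal_zero (n : ℕ) : trajVal Φ D n (0 : Y) = 0 := by
  refine le_antisymm ?_ (trajVal_nonneg Φ D n 0)
  have := trajVal_le Φ D n (0 : Y) 0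
  rwa [trajCost_zero, Real.sqrt_zero] at this

lemma trajVal_add_le (n : ℕ) (y y' : Y) :
    trajVal Φ D n (y + y') ≤ trajVal Φ D n y + trajVal Φ D n y' := by
  have H : ∀ u u' : ℕ → U, trajVal Φ D n (y + y')
      ≤ Real.sqrt (trajCost Φ D y u n) + Real.sqrt (trajCost Φ D y' u' n) := fun u u' =>
    (trajVal_le Φ D n (y + y') (u + u')).trans (sqrt_trajCost_add Φ D y y' u u' n)
  have H2 : ∀ u : ℕ → U, trajVal Φ D n (y + y') - trajVal Φ D n y'
      ≤ Real.sqrt (trajCost Φ D y u n) := by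
    intro u
    have : trajVal Φ D n (y + y') - Real.sqrt (trajCost Φ D y u n) ≤ trajVal Φ D n y' :=
      le_ciInf fun u' => by linarith [H u u']
    linarith
  have := le_ciInf H2
  change _ ≤ trajVal Φ D n y at this
  linarith

lemma trajVal_smul_le (a : ℝ) (n : ℕ) (y : Y) :
    trajVal Φ D n (a • y) ≤ ‖a‖ * trajVal Φ D n y := by
  rcases eq_or_ne a 0 with rfl | ha
  · simp [trajVal_zero]
  have hna : 0 < ‖a‖ := norm_pos_iff.2 ha
  have H : ∀ u : ℕ → U, trajVal Φ D n (a • y) ≤ ‖a‖ * Real.sqrt (trajCost Φ D y u n) := by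
    intro u
    have h1 : trajVal Φ D n (a • y) ≤ Real.sqrt (trajCost Φ D (a • y) (a • u) n) :=
      trajVal_le Φ D n (a • y) (a • u)
    rw [trajCost_smul, Real.sqrt_mul (sq_nonneg a), Real.sqrt_sq_eq_abs,
      ← Real.norm_eq_abs] at h1
    exact h1
  have H2 : trajVal Φ D n (a • y) / ‖a‖ ≤ trajVal Φ D n y :=
    le_ciInf fun u => (div_le_iff₀' hna).2 (H u)
  calc trajVal Φ D n (a • y) = ‖a‖ * (trajVal Φ D n (a • y) / ‖a‖) := by
        field_simp
    _ ≤ ‖a‖ * trajVal Φ D n y := by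
        exact mul_le_mul_of_nonneg_left H2 (le_of_lt hna)

/-- The truncated value as a seminorm on `Y`. -/
noncomputable def trajSemi (n : ℕ) : Seminorm ℝ Y :=
  Seminorm.ofSMulLE (trajVal Φ D n) (trajVal_zero Φ D n) (trajVal_add_le Φ D n)
    (fun a y => trajVal_smul_le Φ D a n y)

lemma trajSemi_apply (n : ℕ) (y : Y) : trajSemi Φ D n y = trajVal Φ D n y := rfl

lemma trajVal_le_const_mul_norm (n : ℕ) (y : Y) :
    trajVal Φ D n y ≤ Real.sqrt (∑ i ∈ Finset.range n, (‖Φ‖ ^ (i+1)) ^ 2) * ‖y‖ := by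
  have h1 : trajVal Φ D n y ≤ Real.sqrt (trajCost Φ D y (0 : ℕ → U) n) := trajVal_le Φ D n y 0
  refine h1.trans ?_
  rw [← Real.sqrt_sq (norm_nonneg y), ← Real.sqrt_mul (by positivity)]
  apply Real.sqrt_le_sqrt
  unfold trajCost
  rw [Finset.sum_mul]
  apply Finset.sum_le_sum
  intro i _
  have h2 : ‖discreteTraj Φ D y (0 : ℕ → U) (i+1)‖ ≤ ‖Φ‖ ^ (i+1) * ‖y‖ :=
    norm_traj_ctrl_zero_le Φ D y (i+1)
  have h3 : ‖(0 : ℕ → U) i‖ = 0 := by simp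
  rw [h3]
  calc ‖discreteTraj Φ D y (0 : ℕ → U) (i+1)‖ ^ 2 + 0 ^ 2
      = ‖discreteTraj Φ D y (0 : ℕ → U) (i+1)‖ ^ 2 := by ring
    _ ≤ (‖Φ‖ ^ (i+1) * ‖y‖) ^ 2 := pow_le_pow_left₀ (norm_nonneg _) h2 2
    _ = (‖Φ‖ ^ (i+1)) ^ 2 * ‖y‖ ^ 2 := by ring

lemma trajSemi_continuous (n : ℕ) : Continuous (trajSemi Φ D n : Y → ℝ) := by
  have hb : trajSemi Φ D n ≤ (Real.sqrt (∑ i ∈ Finset.range n, (‖Φ‖ ^ (i+1)) ^ 2)).toNNReal • normSeminorm ℝ Y := by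
    intro y
    have := trajVal_le_const_mul_norm Φ D n y
    simp only [Seminorm.smul_apply, coe_normSeminorm, NNReal.smul_def, smul_eq_mul]
    rw [Real.coe_toNNReal _ (Real.sqrt_nonneg _)]
    exact this
  refine Seminorm.continuous_of_le ?_ hb
  have : ((Real.sqrt (∑ i ∈ Finset.range n, (‖Φ‖ ^ (i+1)) ^ 2)).toNNReal • normSeminorm ℝ Y : Seminorm ℝ Y).toFun = fun y : Y => (Real.sqrt (∑ i ∈ Finset.range n, (‖Φ‖ ^ (i+1)) ^ 2)).toNNReal * ‖y‖ := rfl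
  show Continuous ((Real.sqrt (∑ i ∈ Finset.range n, (‖Φ‖ ^ (i+1)) ^ 2)).toNNReal • normSeminorm ℝ Y : Seminorm ℝ Y).toFun
  rw [this]
  exact continuous_const.mul continuous_norm

end Semi

section Unif
variable [NormedAddCommGroup Y] [NormedSpace ℝ Y] [NormedAddCommGroup U] [NormedSpace ℝ U]
variable [CompleteSpace Y]
variable (Φ : Y →L[ℝ] Y) (D : U →L[ℝ] Y)

lemma exists_uniform_bound
    (h : ∀ y : Y, BddAbove (Set.range fun n => trajVal Φ D n y)) :
    ∃ C : ℝ, 0 < C ∧ ∀ (n : ℕ) (y : Y), trajVal Φ D n y ≤ C * ‖y‖ := by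
  have hbdd : BddAbove (Set.range (trajSemi Φ D)) :=
    Seminorm.bddAbove_range_iff.mpr h
  have hcont : Continuous ((⨆ n, trajSemi Φ D n : Seminorm ℝ Y) : Y → ℝ) := by
    rw [Seminorm.coe_iSup_eq hbdd]
    exact Seminorm.continuous_iSup (trajSemi Φ D) (trajSemi_continuous Φ D) hbdd
  obtain ⟨C, hC, hle⟩ := Seminorm.bound_of_continuous_normedSpace _ hcont
  refine ⟨C, hC, fun n y => ?_⟩
  have h1 : trajSemi Φ D n ≤ ⨆ k, trajSemi Φ D k := le_ciSup hbdd n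
  exact (h1 y).trans (hle y)

end Unif

section Build
variable [NormedAddCommGroup Y] [NormedSpace ℝ Y] [NormedAddCommGroup U] [NormedSpace ℝ U]
variable (Φ : Y →L[ℝ] Y) (D : U →L[ℝ] Y) (m : Y → ℕ) (uc : Y → ℕ → U) (y₀ : Y)

/-- States at the beginning of each phase. -/
noncomputable def phaseState : ℕ → Y
  | 0 => y₀
  | k + 1 => discreteTraj Φ D (phaseState k) (uc (phaseState k)) (m (phaseState k))

/-- Starting time of each phase. -/
noncomputable def phaseTime : ℕ → ℕ
  | 0 => 0
  | k + 1 => phaseTime k + m (phaseState Φ D m uc y₀ k)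

/-- Index of the phase containing time `t`. -/
noncomputable def phaseIdx (t : ℕ) : ℕ :=
  Nat.findGreatest (fun k => phaseTime Φ D m uc y₀ k ≤ t) t

/-- The concatenated control. -/
noncomputable def globCtrl (t : ℕ) : U :=
  uc (phaseState Φ D m uc y₀ (phaseIdx Φ D m uc y₀ t))
    (t - phaseTime Φ D m uc y₀ (phaseIdx Φ D m uc y₀ t))

variable (hm1 : ∀ y, 1 ≤ m y)
include hm1

lemma phaseTime_strictMono : StrictMono (phaseTime Φ D m uc y₀) := by
  apply strictMono_nat_of_lt_succ
  intro k
  have := hm1 (phaseState Φ D m uc y₀ k)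
  show phaseTime Φ D m uc y₀ k < phaseTime Φ D m uc y₀ k + m (phaseState Φ D m uc y₀ k)
  omega

lemma le_phaseTime (k : ℕ) : k ≤ phaseTime Φ D m uc y₀ k := by
  induction k with
  | zero => exact Nat.zero_le _
  | succ k ih =>
    have := hm1 (phaseState Φ D m uc y₀ k)
    show k + 1 ≤ phaseTime Φ D m uc y₀ k + m (phaseState Φ D m uc y₀ k)
    omega

lemma phaseIdx_eq (k t : ℕ) (h1 : phaseTime Φ D m uc y₀ k ≤ t)
    (h2 : t < phaseTime Φ D m uc y₀ (k + 1)) :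
    phaseIdx Φ D m uc y₀ t = k := by
  have hkt : k ≤ t := (le_phaseTime Φ D m uc y₀ hm1 k).trans h1
  have hspec : phaseTime Φ D m uc y₀ (phaseIdx Φ D m uc y₀ t) ≤ t :=
    Nat.findGreatest_spec (P := fun k => phaseTime Φ D m uc y₀ k ≤ t) (Nat.zero_le t)
      (Nat.zero_le t)
  have hle : k ≤ phaseIdx Φ D m uc y₀ t :=
    Nat.le_findGreatest hkt h1
  by_contra hne
  have hlt : k < phaseIdx Φ D m uc y₀ t := lt_of_le_of_ne hle (Ne.symm hne)
  have : phaseTime Φ D m uc y₀ (k + 1) ≤ phaseTime Φ D m uc y₀ (phaseIdx Φ D m uc y₀ t) :=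
    (phaseTime_strictMono Φ D m uc y₀ hm1).monotone hlt
  omega

lemma globCtrl_eq (k i : ℕ) (hi : i < m (phaseState Φ D m uc y₀ k)) :
    globCtrl Φ D m uc y₀ (phaseTime Φ D m uc y₀ k + i)
      = uc (phaseState Φ D m uc y₀ k) i := by
  have h1 : phaseTime Φ D m uc y₀ k ≤ phaseTime Φ D m uc y₀ k + i := Nat.le_add_right _ _
  have h2 : phaseTime Φ D m uc y₀ k + i < phaseTime Φ D m uc y₀ (k + 1) := by
    show _ < phaseTime Φ D m uc y₀ k + m (phaseState Φ D m uc y₀ k)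
    omega
  unfold globCtrl
  rw [phaseIdx_eq Φ D m uc y₀ hm1 k _ h1 h2]
  congr 1
  omega

lemma traj_phase (k : ℕ) :
    discreteTraj Φ D y₀ (globCtrl Φ D m uc y₀) (phaseTime Φ D m uc y₀ k)
      = phaseState Φ D m uc y₀ k ∧
    ∀ i ≤ m (phaseState Φ D m uc y₀ k),
      discreteTraj Φ D y₀ (globCtrl Φ D m uc y₀) (phaseTime Φ D m uc y₀ k + i)
        = discreteTraj Φ D (phaseState Φ D m uc y₀ k) (uc (phaseState Φ D m uc y₀ k)) i := by
  induction k with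
  | zero =>
    have base : discreteTraj Φ D y₀ (globCtrl Φ D m uc y₀) (phaseTime Φ D m uc y₀ 0) = y₀ := rfl
    refine ⟨base, ?_⟩
    intro i hi
    induction i with
    | zero => exact base
    | succ i ih =>
      have hii : i ≤ m (phaseState Φ D m uc y₀ 0) := Nat.le_of_succ_le hi
      show Φ (discreteTraj Φ D y₀ (globCtrl Φ D m uc y₀) (phaseTime Φ D m uc y₀ 0 + i))
            + D (globCtrl Φ D m uc y₀ (phaseTime Φ D m uc y₀ 0 + i)) = _
      rw [ih hii, globCtrl_eq Φ D m uc y₀ hm1 0 i (Nat.lt_of_succ_le hi)]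
      rfl
  | succ k ihk =>
    obtain ⟨_, hk2⟩ := ihk
    have base : discreteTraj Φ D y₀ (globCtrl Φ D m uc y₀) (phaseTime Φ D m uc y₀ (k+1))
        = phaseState Φ D m uc y₀ (k+1) := by
      show discreteTraj Φ D y₀ (globCtrl Φ D m uc y₀)
          (phaseTime Φ D m uc y₀ k + m (phaseState Φ D m uc y₀ k)) = _
      rw [hk2 _ le_rfl]
      rfl
    refine ⟨base, ?_⟩
    intro i hi
    induction i with
    | zero => exact base
    | succ i ih =>
      have hii : i ≤ m (phaseState Φ D m uc y₀ (k+1)) := Nat.le_of_succ_le hi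
      show Φ (discreteTraj Φ D y₀ (globCtrl Φ D m uc y₀) (phaseTime Φ D m uc y₀ (k+1) + i))
            + D (globCtrl Φ D m uc y₀ (phaseTime Φ D m uc y₀ (k+1) + i)) = _
      rw [ih hii, globCtrl_eq Φ D m uc y₀ hm1 (k+1) i (Nat.lt_of_succ_le hi)]
      rfl

lemma cost_phases (k : ℕ) :
    ∑ t ∈ Finset.range (phaseTime Φ D m uc y₀ k),
        (‖discreteTraj Φ D y₀ (globCtrl Φ D m uc y₀) (t + 1)‖ ^ 2
          + ‖globCtrl Φ D m uc y₀ t‖ ^ 2)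
      = ∑ j ∈ Finset.range k,
          trajCost Φ D (phaseState Φ D m uc y₀ j) (uc (phaseState Φ D m uc y₀ j))
            (m (phaseState Φ D m uc y₀ j)) := by
  induction k with
  | zero => rfl
  | succ k ih =>
    have hsplit : phaseTime Φ D m uc y₀ (k+1)
        = phaseTime Φ D m uc y₀ k + m (phaseState Φ D m uc y₀ k) := rfl
    rw [hsplit, Finset.sum_range_add, ih, Finset.sum_range_succ]
    congr 1
    unfold trajCost
    refine Finset.sum_congr rfl fun i hi => ?_
    rw [Finset.mem_range] at hi
    have h1 : discreteTraj Φ D y₀ (globCtrl Φ D m uc y₀) (phaseTime Φ D m uc y₀ k + i + 1)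
        = discreteTraj Φ D (phaseState Φ D m uc y₀ k) (uc (phaseState Φ D m uc y₀ k)) (i + 1) :=
      (traj_phase Φ D m uc y₀ hm1 k).2 (i + 1) (Nat.succ_le_of_lt hi)
    rw [h1, globCtrl_eq Φ D m uc y₀ hm1 k i hi]

end Build

section Main
variable [NormedAddCommGroup Y] [NormedSpace ℝ Y] [NormedAddCommGroup U] [NormedSpace ℝ U]
variable (Φ : Y →L[ℝ] Y) (D : U →L[ℝ] Y)

lemma step_exists (C : ℝ)
    (hbound : ∀ (n : ℕ) (y : Y), trajVal Φ D n y ≤ C * ‖y‖) (y : Y) :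
    ∃ (mm : ℕ) (u : ℕ → U), 1 ≤ mm ∧
      trajCost Φ D y u mm ≤ (C ^ 2 + 1) * ‖y‖ ^ 2 ∧
      ‖discreteTraj Φ D y u mm‖ ^ 2 ≤ ‖y‖ ^ 2 / 2 := by
  set N : ℕ := ⌈(2 * (C ^ 2 + 1) : ℝ)⌉₊ with hNdef
  have hN : (2 * (C ^ 2 + 1) : ℝ) ≤ N := Nat.le_ceil _
  have hN1 : 0 < N := Nat.ceil_pos.mpr (by positivity)
  rcases eq_or_ne ‖y‖ 0 with hy | hy
  · have hy0 : y = 0 := norm_eq_zero.1 hy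
    subst hy0
    refine ⟨1, 0, le_rfl, ?_, ?_⟩
    · rw [trajCost_zero]
      positivity
    · rw [traj_zero]
      simp
  · have hy2 : 0 < ‖y‖ ^ 2 := by positivity
    have hval : trajVal Φ D N y ≤ C * ‖y‖ := hbound N y
    have hCy : C * ‖y‖ ≤ |C| * ‖y‖ :=
      mul_le_mul_of_nonneg_right (le_abs_self C) (norm_nonneg y)
    have hlt : trajVal Φ D N y < Real.sqrt ((C ^ 2 + 1) * ‖y‖ ^ 2) := by
      have h1 : (|C| * ‖y‖) ^ 2 < (C ^ 2 + 1) * ‖y‖ ^ 2 := by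
        have : (|C| * ‖y‖) ^ 2 = C ^ 2 * ‖y‖ ^ 2 := by
          rw [mul_pow, sq_abs]
        rw [this]
        nlinarith
      have h2 : |C| * ‖y‖ < Real.sqrt ((C ^ 2 + 1) * ‖y‖ ^ 2) := by
        have := Real.sqrt_lt_sqrt (sq_nonneg _) h1
        rwa [Real.sqrt_sq (by positivity)] at this
      exact lt_of_le_of_lt (hval.trans hCy) h2
    unfold trajVal at hlt
    obtain ⟨u, hu⟩ := exists_lt_of_ciInf_lt hlt
    have hcostN : trajCost Φ D y u N < (C ^ 2 + 1) * ‖y‖ ^ 2 := by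
      have h0 := trajCost_nonneg Φ D y u N
      nlinarith [Real.sq_sqrt h0, Real.sq_sqrt (show (0:ℝ) ≤ (C ^ 2 + 1) * ‖y‖ ^ 2 by positivity),
        Real.sqrt_nonneg (trajCost Φ D y u N),
        Real.sqrt_nonneg ((C ^ 2 + 1) * ‖y‖ ^ 2)]
    have hexist : ∃ i, i < N ∧ ‖discreteTraj Φ D y u (i + 1)‖ ^ 2 ≤ ‖y‖ ^ 2 / 2 := by
      by_contra hcon
      push_neg at hcon
      have hsum : ∑ i ∈ Finset.range N, ‖discreteTraj Φ D y u (i + 1)‖ ^ 2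
          ≤ trajCost Φ D y u N :=
        Finset.sum_le_sum fun i _ => by
          have : (0:ℝ) ≤ ‖u i‖ ^ 2 := by positivity
          linarith
      have hgt : (N : ℝ) * (‖y‖ ^ 2 / 2)
          < ∑ i ∈ Finset.range N, ‖discreteTraj Φ D y u (i + 1)‖ ^ 2 := by
        have hne : (Finset.range N).Nonempty := ⟨0, Finset.mem_range.2 hN1⟩
        have := Finset.sum_lt_sum_of_nonempty hne
          (f := fun _ => ‖y‖ ^ 2 / 2)
          (g := fun i => ‖discreteTraj Φ D y u (i + 1)‖ ^ 2)
          (fun i hi => hcon i (Finset.mem_range.1 hi))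
        simpa [Finset.sum_const, Finset.card_range, nsmul_eq_mul] using this
      have hNhalf : (C ^ 2 + 1) * ‖y‖ ^ 2 ≤ (N : ℝ) * (‖y‖ ^ 2 / 2) := by
        have := mul_le_mul_of_nonneg_right hN (le_of_lt (show (0:ℝ) < ‖y‖ ^ 2 / 2 by positivity))
        calc (C ^ 2 + 1) * ‖y‖ ^ 2 = 2 * (C ^ 2 + 1) * (‖y‖ ^ 2 / 2) := by ring
          _ ≤ (N : ℝ) * (‖y‖ ^ 2 / 2) := this
      linarith
    obtain ⟨i, hiN, hidec⟩ := hexist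
    refine ⟨i + 1, u, Nat.succ_le_succ (Nat.zero_le _), ?_, hidec⟩
    exact (trajCost_mono Φ D y u (Nat.succ_le_of_lt hiN)).trans hcostN.le

lemma solvable_of_bound (C : ℝ)
    (hbound : ∀ (n : ℕ) (y : Y), trajVal Φ D n y ≤ C * ‖y‖) (y₀ : Y) :
    ∃ u : ℕ → U, Summable (fun i => ‖u i‖ ^ 2) ∧
      Summable (fun i => ‖discreteTraj Φ D y₀ u (i + 1)‖ ^ 2 + ‖u i‖ ^ 2) := by
  choose m uc hm1 hcost hdec using step_exists Φ D C hbound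
  set g := globCtrl Φ D m uc y₀ with hg
  set f : ℕ → ℝ := fun t => ‖discreteTraj Φ D y₀ g (t + 1)‖ ^ 2 + ‖g t‖ ^ 2 with hf
  have hZ : ∀ k, ‖phaseState Φ D m uc y₀ k‖ ^ 2 ≤ ‖y₀‖ ^ 2 * (1 / 2) ^ k := by
    intro k
    induction k with
    | zero => simp [phaseState]
    | succ k ih =>
      have h1 : ‖phaseState Φ D m uc y₀ (k + 1)‖ ^ 2
          ≤ ‖phaseState Φ D m uc y₀ k‖ ^ 2 / 2 := hdec _
      calc ‖phaseState Φ D m uc y₀ (k + 1)‖ ^ 2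
          ≤ ‖phaseState Φ D m uc y₀ k‖ ^ 2 / 2 := h1
        _ ≤ (‖y₀‖ ^ 2 * (1 / 2) ^ k) / 2 := by linarith
        _ = ‖y₀‖ ^ 2 * (1 / 2) ^ (k + 1) := by ring
  have hpartial : ∀ k, ∑ t ∈ Finset.range (phaseTime Φ D m uc y₀ k), f t
      ≤ (C ^ 2 + 1) * (‖y₀‖ ^ 2 * 2) := by
    intro k
    have := cost_phases Φ D m uc y₀ hm1 k
    rw [hf]
    rw [hg] at *
    rw [this]
    calc ∑ j ∈ Finset.range k,
          trajCost Φ D (phaseState Φ D m uc y₀ j) (uc (phaseState Φ D m uc y₀ j))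
            (m (phaseState Φ D m uc y₀ j))
        ≤ ∑ j ∈ Finset.range k, (C ^ 2 + 1) * (‖y₀‖ ^ 2 * (1 / 2) ^ j) := by
          apply Finset.sum_le_sum
          intro j _
          refine (hcost _).trans ?_
          have h1 : (0:ℝ) ≤ C ^ 2 + 1 := by positivity
          exact mul_le_mul_of_nonneg_left (hZ j) h1
      _ = (C ^ 2 + 1) * ‖y₀‖ ^ 2 * ∑ j ∈ Finset.range k, (1 / 2 : ℝ) ^ j := by
          rw [Finset.mul_sum]
          congr 1
          ext j
          ring
      _ ≤ (C ^ 2 + 1) * ‖y₀‖ ^ 2 * 2 := by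
          have h2 : ∑ j ∈ Finset.range k, (1 / 2 : ℝ) ^ j ≤ 2 := by
            have := sum_geometric_two_le k
            simpa [one_div] using this
          have h1 : (0:ℝ) ≤ (C ^ 2 + 1) * ‖y₀‖ ^ 2 := by positivity
          exact mul_le_mul_of_nonneg_left h2 h1
      _ = (C ^ 2 + 1) * (‖y₀‖ ^ 2 * 2) := by ring
  have hfnonneg : ∀ t, 0 ≤ f t := fun t => by rw [hf]; positivity
  have hall : ∀ n, ∑ t ∈ Finset.range n, f t ≤ (C ^ 2 + 1) * (‖y₀‖ ^ 2 * 2) := by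
    intro n
    refine le_trans ?_ (hpartial n)
    apply Finset.sum_le_sum_of_subset_of_nonneg
    · exact Finset.range_subset_range.2 (le_phaseTime Φ D m uc y₀ hm1 n)
    · exact fun i _ _ => hfnonneg i
  have hsumf : Summable f := summable_of_sum_range_le hfnonneg hall
  refine ⟨g, ?_, hsumf⟩
  refine hsumf.of_nonneg_of_le (fun i => by positivity) fun i => ?_
  show ‖g i‖ ^ 2 ≤ ‖discreteTraj Φ D y₀ g (i + 1)‖ ^ 2 + ‖g i‖ ^ 2
  have : (0:ℝ) ≤ ‖discreteTraj Φ D y₀ g (i + 1)‖ ^ 2 := by positivity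
  linarith

end Main

/-- The discrete LQ problem is solvable (finite infimum of the infinite-horizon cost over
`l²` controls for every initial datum) iff the truncated infima are uniformly bounded
for every initial datum. -/
theorem stmt0
    [NormedAddCommGroup Y] [InnerProductSpace ℝ Y] [CompleteSpace Y]
    [NormedAddCommGroup U] [InnerProductSpace ℝ U] [CompleteSpace U]
    (Φ : Y →L[ℝ] Y) (D : U →L[ℝ] Y) :
    (∀ y₀ : Y, ∃ M : ℝ, ∀ n : ℕ, ∃ u : ℕ → U, Summable (fun i => ‖u i‖ ^ 2) ∧
        ∑ i ∈ Finset.range n,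
          (‖discreteTraj Φ D y₀ u (i + 1)‖ ^ 2 + ‖u i‖ ^ 2) ≤ M)
    ↔
    (∀ y₀ : Y, ∃ u : ℕ → U, Summable (fun i => ‖u i‖ ^ 2) ∧
        Summable (fun i => ‖discreteTraj Φ D y₀ u (i + 1)‖ ^ 2 + ‖u i‖ ^ 2)) := by
  constructor
  · intro h
    have hpt : ∀ y : Y, BddAbove (Set.range fun n => trajVal Φ D n y) := by
      intro y
      obtain ⟨M, hM⟩ := h y
      refine ⟨Real.sqrt M, ?_⟩
      rintro _ ⟨n, rfl⟩
      obtain ⟨u, _, hc⟩ := hM n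
      have hc' : trajCost Φ D y u n ≤ M := hc
      exact (trajVal_le Φ D n y u).trans (Real.sqrt_le_sqrt hc')
    obtain ⟨C, _, hbound⟩ := exists_uniform_bound Φ D hpt
    exact solvable_of_bound Φ D C hbound
  · intro h y₀
    obtain ⟨u, hu1, hu2⟩ := h y₀
    refine ⟨∑' i, (‖discreteTraj Φ D y₀ u (i + 1)‖ ^ 2 + ‖u i‖ ^ 2), fun n => ⟨u, hu1, ?_⟩⟩
    exact Summable.sum_le_tsum (Finset.range n) (fun i _ => by positivity) hu2
end

section
/- Let {S(t)}_{t≥0} be a C₀-semigroup on a Hilbert space Y, B ∈ L(U;Y), T₀ > 0, N ∈ ℕ⁺, δ ∈ (0,1), C ≥ 0. Suppose that for all φ ∈ Y, ‖S(NT₀)*φ‖² ≤ C Σ_{i=1}^N ‖∫_{(i-1)T₀}^{iT₀} B*S(t)*φ dt‖_U² + δ‖φ‖². Then for every m ∈ ℕ⁺ and all φ ∈ Y, ‖S(mNT₀)*φ‖² ≤ C Σ_{i=1}^{mN} ‖∫_{(i-1)T₀}^{iT₀} B*S(t)*φ dt‖_U² + δ^m ‖φ‖². -/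
open scoped BigOperators

/-- Self-improvement of the discrete weak observability inequality under iteration:
if it holds with horizon `N T₀` and remainder `δ`, it holds with horizon `m N T₀` and
remainder `δ^m` for every `m ≥ 1`. -/
theorem stmt3 {Y U : Type*}
    [NormedAddCommGroup Y] [InnerProductSpace ℝ Y] [CompleteSpace Y]
    [NormedAddCommGroup U] [InnerProductSpace ℝ U] [CompleteSpace U]
    (S : ℝ → Y →L[ℝ] Y)
    (hS0 : S 0 = ContinuousLinearMap.id ℝ Y)
    (hsemi : ∀ s t : ℝ, 0 ≤ s → 0 ≤ t → S (s + t) = (S s).comp (S t))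
    (hcont : ∀ φ : Y, Continuous fun t : ℝ => (ContinuousLinearMap.adjoint (S t)) φ)
    (B : U →L[ℝ] Y)
    (T₀ : ℝ) (hT₀ : 0 < T₀) (N : ℕ) (hN : 1 ≤ N)
    (δ : ℝ) (hδ : δ ∈ Set.Ioo (0 : ℝ) 1) (C : ℝ) (hC : 0 ≤ C)
    (hobs : ∀ φ : Y,
      ‖(ContinuousLinearMap.adjoint (S (N * T₀))) φ‖ ^ 2 ≤
        C * ∑ i ∈ Finset.range N,
          ‖∫ t in ((i : ℝ) * T₀)..(((i : ℝ) + 1) * T₀),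
            (ContinuousLinearMap.adjoint B) ((ContinuousLinearMap.adjoint (S t)) φ)‖ ^ 2
        + δ * ‖φ‖ ^ 2) :
    ∀ m : ℕ, 1 ≤ m → ∀ φ : Y,
      ‖(ContinuousLinearMap.adjoint (S (m * N * T₀))) φ‖ ^ 2 ≤
        C * ∑ i ∈ Finset.range (m * N),
          ‖∫ t in ((i : ℝ) * T₀)..(((i : ℝ) + 1) * T₀),
            (ContinuousLinearMap.adjoint B) ((ContinuousLinearMap.adjoint (S t)) φ)‖ ^ 2
        + δ ^ m * ‖φ‖ ^ 2 := by
  obtain ⟨hδ0, hδ1⟩ := hδ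
  intro m hm
  induction m, hm using Nat.le_induction with
  | base =>
    intro φ
    simpa using hobs φ
  | succ m hm ih =>
    intro φ
    have hNT : (0:ℝ) ≤ (N:ℝ) * T₀ := by positivity
    have ha : (0:ℝ) ≤ (m:ℝ) * N * T₀ := by positivity
    set ψ := (ContinuousLinearMap.adjoint (S ((m:ℝ) * N * T₀))) φ with hψ
    have hcomp : ∀ t : ℝ, 0 ≤ t →
        (ContinuousLinearMap.adjoint (S t)) ψ
          = (ContinuousLinearMap.adjoint (S ((m:ℝ) * N * T₀ + t))) φ := by
      intro t ht
      rw [hψ, hsemi _ _ ha ht, ContinuousLinearMap.adjoint_comp]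
      rfl
    have hL : (ContinuousLinearMap.adjoint (S ((↑(m+1):ℝ) * N * T₀))) φ
        = (ContinuousLinearMap.adjoint (S ((N:ℝ) * T₀))) ψ := by
      rw [hcomp _ hNT]
      congr 2
      push_cast; ring
    have hint : ∀ i ∈ Finset.range N,
        ‖∫ t in ((i : ℝ) * T₀)..(((i : ℝ) + 1) * T₀),
            (ContinuousLinearMap.adjoint B) ((ContinuousLinearMap.adjoint (S t)) ψ)‖ ^ 2
        = ‖∫ t in ((↑(m*N+i) : ℝ) * T₀)..(((↑(m*N+i) : ℝ) + 1) * T₀),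
            (ContinuousLinearMap.adjoint B) ((ContinuousLinearMap.adjoint (S t)) φ)‖ ^ 2 := by
      intro i hi
      have hle : (i : ℝ) * T₀ ≤ ((i : ℝ) + 1) * T₀ := by nlinarith [hT₀.le]
      have h1 : (∫ t in ((i : ℝ) * T₀)..(((i : ℝ) + 1) * T₀),
            (ContinuousLinearMap.adjoint B) ((ContinuousLinearMap.adjoint (S t)) ψ))
          = ∫ t in ((i : ℝ) * T₀)..(((i : ℝ) + 1) * T₀),
            (ContinuousLinearMap.adjoint B)
              ((ContinuousLinearMap.adjoint (S ((m:ℝ) * N * T₀ + t))) φ) := by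
        apply intervalIntegral.integral_congr
        intro t ht
        rw [Set.uIcc_of_le hle] at ht
        have h0 : (0:ℝ) ≤ t := le_trans (by positivity) ht.1
        simp only [hcomp t h0]
      rw [h1,
        intervalIntegral.integral_comp_add_left
          (fun t => (ContinuousLinearMap.adjoint B) ((ContinuousLinearMap.adjoint (S t)) φ))
          ((m:ℝ) * N * T₀)]
      congr 2 <;> push_cast <;> ring
    have h1 := hobs ψ
    rw [Finset.sum_congr rfl hint] at h1
    have hsplit : ∑ i ∈ Finset.range ((m+1) * N),
          ‖∫ t in ((i : ℝ) * T₀)..(((i : ℝ) + 1) * T₀),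
            (ContinuousLinearMap.adjoint B) ((ContinuousLinearMap.adjoint (S t)) φ)‖ ^ 2
        = (∑ i ∈ Finset.range (m * N),
            ‖∫ t in ((i : ℝ) * T₀)..(((i : ℝ) + 1) * T₀),
              (ContinuousLinearMap.adjoint B) ((ContinuousLinearMap.adjoint (S t)) φ)‖ ^ 2)
          + ∑ i ∈ Finset.range N,
            ‖∫ t in ((↑(m*N+i) : ℝ) * T₀)..(((↑(m*N+i) : ℝ) + 1) * T₀),
              (ContinuousLinearMap.adjoint B) ((ContinuousLinearMap.adjoint (S t)) φ)‖ ^ 2 := by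
      rw [show (m+1) * N = m * N + N by ring, Finset.sum_range_add]
    have h2 := ih φ
    have hBs : (0:ℝ) ≤ ∑ i ∈ Finset.range (m * N),
          ‖∫ t in ((i : ℝ) * T₀)..(((i : ℝ) + 1) * T₀),
            (ContinuousLinearMap.adjoint B) ((ContinuousLinearMap.adjoint (S t)) φ)‖ ^ 2 :=
      Finset.sum_nonneg fun i _ => by positivity
    rw [hL, hsplit]
    have hψn : (0:ℝ) ≤ ‖ψ‖ ^ 2 := by positivity
    have hδm : (0:ℝ) ≤ δ ^ m := by positivity
    rw [← hψ] at h2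
    have h4 : δ * (C * ∑ i ∈ Finset.range (m * N),
          ‖∫ t in ((i : ℝ) * T₀)..(((i : ℝ) + 1) * T₀),
            (ContinuousLinearMap.adjoint B) ((ContinuousLinearMap.adjoint (S t)) φ)‖ ^ 2)
        ≤ C * ∑ i ∈ Finset.range (m * N),
          ‖∫ t in ((i : ℝ) * T₀)..(((i : ℝ) + 1) * T₀),
            (ContinuousLinearMap.adjoint B) ((ContinuousLinearMap.adjoint (S t)) φ)‖ ^ 2 :=
      mul_le_of_le_one_left (mul_nonneg hC hBs) hδ1.le
    have h3 := mul_le_mul_of_nonneg_left h2 hδ0.le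
    have h5 : δ * (δ ^ m * ‖φ‖ ^ 2) = δ ^ (m + 1) * ‖φ‖ ^ 2 := by ring
    linarith [h1, h3, h4, h5]
end

section
/- If T = kπ for some k ∈ ℕ⁺, then for every N ∈ ℕ⁺ and every C > 0 the inequality ‖(φ₁,φ₂)‖² ≤ C Σ_{j=1}^N |∫_{(j-1)T}^{jT} (φ₁ sin t + φ₂ cos t) dt|² fails for some (φ₁,φ₂) ∈ ℝ². Specifically, for (φ₁,φ₂) = (0,γ) with γ > 0, each integral ∫_{(j-1)T}^{jT} cos t dt = sin(jT) - sin((j-1)T) = 0 while ‖(0,γ)‖ = γ > 0. -/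
open scoped BigOperators

lemma sin_nat_mul_nat_pi (n k : ℕ) : Real.sin ((n : ℝ) * ((k : ℝ) * Real.pi)) = 0 := by
  rw [← mul_assoc, ← Nat.cast_mul]
  exact Real.sin_nat_mul_pi (n * k)

/-- For pathological sampling periods `T = kπ` the weak observability inequality for the
harmonic oscillator fails for every `N` and `C`: each sampled integral of `cos` vanishes,
so the witness `(φ₁,φ₂) = (0,γ)` with `γ > 0` violates the inequality. -/
theorem stmt6 (T : ℝ) (k : ℕ) (hk : 1 ≤ k) (hT : T = k * Real.pi) :
    (∀ j : ℕ, (∫ t in ((j : ℝ) * T)..(((j : ℝ) + 1) * T), Real.cos t) = 0) ∧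
    (∀ N : ℕ, 1 ≤ N → ∀ C : ℝ, 0 < C →
      ∃ φ₁ φ₂ : ℝ,
        ¬ (φ₁ ^ 2 + φ₂ ^ 2 ≤
            C * ∑ j ∈ Finset.range N,
              (∫ t in ((j : ℝ) * T)..(((j : ℝ) + 1) * T),
                (φ₁ * Real.sin t + φ₂ * Real.cos t)) ^ 2)) := by
  have hcos : ∀ j : ℕ, (∫ t in ((j : ℝ) * T)..(((j : ℝ) + 1) * T), Real.cos t) = 0 := by
    intro j
    rw [integral_cos, hT]
    have h1 : ((j : ℝ) + 1) = ((j + 1 : ℕ) : ℝ) := by push_cast; ring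
    rw [h1, sin_nat_mul_nat_pi, sin_nat_mul_nat_pi, sub_zero]
  refine ⟨hcos, fun N hN C hC => ⟨0, 1, ?_⟩⟩
  have : ∀ j ∈ Finset.range N,
      (∫ t in ((j : ℝ) * T)..(((j : ℝ) + 1) * T),
        ((0 : ℝ) * Real.sin t + (1 : ℝ) * Real.cos t)) ^ 2 = 0 := by
    intro j _
    simp only [zero_mul, one_mul, zero_add]
    rw [hcos j]
    ring
  rw [Finset.sum_congr rfl this]
  simp
end

section
/- Let T > 0, N ∈ ℕ⁺, ε > 0. Let S(t)* denote the unitary group on L²(ℝ;ℂ) acting via Fourier multiplier e^{iξ²t} (the free Schrödinger group). Then there exists φ ∈ L²(ℝ;ℂ) with ‖φ‖ = 1 such that Σ_{i=1}^N ‖∫_{(i-1)T}^{iT} S(t)*φ dt‖ ≤ ε. Consequently, no inequality of the form ‖φ‖² = ‖S(NT)*φ‖² ≤ C Σ_{i=1}^N ‖∫_{(i-1)T}^{iT} S(t)*φ dt‖² + δ‖φ‖² with δ ∈ (0,1) and C ≥ 0 can hold for all φ ∈ L²(ℝ;ℂ). -/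
open MeasureTheory
open scoped BigOperators

open Real
open scoped ENNReal NNReal

set_option maxHeartbeats 1000000 in
theorem myaux (T : ℝ) (hT : 0 < T) (N : ℕ) (hN : 1 ≤ N) (ε : ℝ) (hε : 0 < ε) :
    ∃ φ : ℝ → ℂ, MemLp φ 2 volume ∧ eLpNorm φ 2 volume = 1 ∧
      ∑ i ∈ Finset.range N,
        eLpNorm (fun ξ : ℝ =>
          ∫ t in ((i : ℝ) * T)..(((i : ℝ) + 1) * T),
            Complex.exp (Complex.I * (ξ ^ 2) * t) * φ ξ) 2 volume
        ≤ ENNReal.ofReal ε := by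
  have hπ : (0:ℝ) < π := Real.pi_pos
  have hNpos : (0:ℝ) < N := by exact_mod_cast hN
  set η : ℝ := min 1 (ε * π / (2 * T * N)) with hηdef
  have hη0 : 0 < η := lt_min one_pos (by positivity)
  have hη1 : η ≤ 1 := min_le_left _ _
  have hη2 : η ≤ ε * π / (2 * T * N) := min_le_right _ _
  have hπ1 : (1:ℝ) ≤ π := by nlinarith [Real.pi_gt_three]
  set A : ℝ := (2 * π - η) / T with hA
  set B : ℝ := (2 * π + η) / T with hB
  have hA0 : 0 < A := by apply div_pos _ hT; nlinarith
  have hAB : A < B := by rw [hA, hB]; gcongr; linarith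
  set a : ℝ := Real.sqrt A with ha
  set b : ℝ := Real.sqrt B with hb
  have ha0 : 0 < a := Real.sqrt_pos.2 hA0
  have hab : a < b := Real.sqrt_lt_sqrt hA0.le hAB
  have ha2 : a ^ 2 = A := Real.sq_sqrt hA0.le
  have hb2 : b ^ 2 = B := Real.sq_sqrt (hA0.trans hAB).le
  set L : ℝ := b - a with hL
  have hL0 : 0 < L := sub_pos.2 hab
  clear_value A B
  set s : Set ℝ := Set.Ioc a b with hs
  set cc : ℂ := (((Real.sqrt L)⁻¹ : ℝ) : ℂ) with hcc
  set φ : ℝ → ℂ := s.indicator (fun _ => cc) with hφ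
  have hμs : volume s = ENNReal.ofReal L := by
    rw [hs, Real.volume_Ioc]
  have hmem : MemLp φ 2 volume := by
    refine memLp_indicator_const 2 measurableSet_Ioc cc (Or.inr ?_)
    rw [hμs]; exact ENNReal.ofReal_ne_top
  have hsL : Real.sqrt L ≠ 0 := ne_of_gt (Real.sqrt_pos.2 hL0)
  have hnorm : eLpNorm φ 2 volume = 1 := by
    rw [hφ, eLpNorm_indicator_const measurableSet_Ioc (by norm_num) (by norm_num), hμs]
    rw [show ((2:ℝ≥0∞).toReal) = (2:ℝ) by simp]
    rw [ENNReal.ofReal_rpow_of_pos hL0]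
    have h1 : ‖cc‖ₑ = ENNReal.ofReal ((Real.sqrt L)⁻¹) := by
      rw [hcc]
      rw [← ofReal_norm]
      norm_num [Real.sqrt_nonneg]
    rw [h1, ← ENNReal.ofReal_mul (by positivity)]
    rw [← Real.sqrt_eq_rpow]
    rw [inv_mul_cancel₀ hsL]
    simp
  refine ⟨φ, hmem, hnorm, ?_⟩
  set M : ℝ := 2 * η * T / π with hM
  have hM0 : 0 ≤ M := by positivity
  have key : ∀ i : ℕ,
      eLpNorm (fun ξ : ℝ =>
        ∫ t in ((i : ℝ) * T)..(((i : ℝ) + 1) * T),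
          Complex.exp (Complex.I * (ξ ^ 2) * t) * φ ξ) 2 volume ≤ ENNReal.ofReal M := by
    intro i
    have hb' : eLpNorm ((M : ℂ) • φ) 2 volume = ENNReal.ofReal M := by
      rw [eLpNorm_const_smul, hnorm, mul_one, ← ofReal_norm]
      norm_num [abs_of_nonneg hM0]
    rw [← hb']
    apply eLpNorm_mono
    intro ξ
    by_cases hξ : ξ ∈ s
    · -- main case
      have hξa : a < ξ := hξ.1
      have hξ0 : 0 < ξ := ha0.trans hξa
      have hξ2 : (0:ℝ) < ξ ^ 2 := by positivity
      have hξA : A ≤ ξ ^ 2 := by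
        rw [← ha2]; nlinarith
      have hξB : ξ ^ 2 ≤ B := by
        rw [← hb2]; nlinarith [hξ.2]
      set c' : ℂ := Complex.I * (ξ:ℂ) ^ 2 with hc'
      have hc'0 : c' ≠ 0 := by
        rw [hc']
        apply mul_ne_zero Complex.I_ne_zero
        exact pow_ne_zero 2 (Complex.ofReal_ne_zero.2 (ne_of_gt hξ0))
      have hint : (∫ t in ((i : ℝ) * T)..(((i : ℝ) + 1) * T),
            Complex.exp (Complex.I * (ξ ^ 2) * t) * φ ξ)
          = ((Complex.exp (c' * (((i:ℝ)+1) * T)) - Complex.exp (c' * ((i:ℝ) * T))) / c') * φ ξ := by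
        rw [intervalIntegral.integral_mul_const, integral_exp_mul_complex hc'0]
        push_cast
        ring_nf
      rw [hint]
      -- compute the norm
      have hsplit : Complex.exp (c' * (((i:ℝ)+1) * T)) - Complex.exp (c' * ((i:ℝ) * T))
          = Complex.exp (c' * ((i:ℝ) * T)) * (Complex.exp (c' * T) - 1) := by
        rw [show c' * ((((i:ℝ):ℂ)+1) * (T:ℂ)) = c' * (((i:ℝ):ℂ) * T) + c' * T by ring,
          Complex.exp_add]
        ring
      have habs1 : ‖Complex.exp (c' * ((i:ℝ) * T))‖ = 1 := by
        have h : c' * (((i:ℝ):ℂ) * T) = ((ξ^2 * (i*T) : ℝ):ℂ) * Complex.I := by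
          rw [hc']; push_cast; ring
        rw [h, Complex.norm_exp_ofReal_mul_I]
      have habs2 : ‖Complex.exp (c' * T) - 1‖ ≤ 2 * η := by
        have hexp : Complex.exp (c' * T) = Complex.exp (Complex.I * ((ξ^2 * T - 2*π : ℝ))) := by
          have : c' * T = Complex.I * ((ξ^2 * T - 2*π : ℝ)) + 2*π*Complex.I := by
            push_cast [hc']; ring
          rw [this, Complex.exp_add, Complex.exp_two_pi_mul_I, mul_one]
        rw [hexp]
        have hr : |ξ^2 * T - 2*π| ≤ η := by
          have h1 : (2*π - η)/T ≤ ξ^2 := by rw [← hA]; exact hξA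
          have h2 : ξ^2 ≤ (2*π + η)/T := by rw [← hB]; exact hξB
          rw [div_le_iff₀ hT] at h1
          rw [le_div_iff₀ hT] at h2
          rw [abs_le]; constructor <;> linarith
        have hz : ‖Complex.I * ((ξ^2 * T - 2*π : ℝ))‖ ≤ 1 := by
          rw [norm_mul, Complex.norm_I, one_mul, Complex.norm_real, Real.norm_eq_abs]
          exact hr.trans hη1
        calc ‖Complex.exp (Complex.I * ((ξ^2 * T - 2*π : ℝ))) - 1‖
            ≤ 2 * ‖Complex.I * ((ξ^2 * T - 2*π : ℝ))‖ := Complex.norm_exp_sub_one_le hz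
          _ ≤ 2 * η := by
              rw [norm_mul, Complex.norm_I, one_mul, Complex.norm_real, Real.norm_eq_abs]
              linarith [hr]
      have habsc : ‖c'‖ = ξ ^ 2 := by
        rw [hc', norm_mul, Complex.norm_I, one_mul, norm_pow, Complex.norm_real, Real.norm_eq_abs,
          abs_of_pos hξ0]
      have hnum : ‖Complex.exp (c' * (((i:ℝ)+1) * T)) - Complex.exp (c' * ((i:ℝ) * T))‖ ≤ 2 * η := by
        rw [hsplit, norm_mul, habs1, one_mul]
        exact habs2
      have hfrac : ‖(Complex.exp (c' * (((i:ℝ)+1) * T)) - Complex.exp (c' * ((i:ℝ) * T))) / c'‖ ≤ M := by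
        rw [norm_div, habsc]
        rw [div_le_iff₀ hξ2]
        have hπT : π / T ≤ ξ ^ 2 := by
          apply le_trans _ hξA
          rw [hA]
          gcongr
          linarith
        have : M * (π / T) ≤ M * ξ ^ 2 := by gcongr
        have hMπT : M * (π / T) = 2 * η := by
          rw [hM]; field_simp
        calc ‖Complex.exp (c' * (((i:ℝ)+1) * T)) - Complex.exp (c' * ((i:ℝ) * T))‖ ≤ 2 * η := hnum
          _ = M * (π / T) := hMπT.symm
          _ ≤ M * ξ ^ 2 := this
      calc ‖(Complex.exp (c' * (((i:ℝ)+1) * T)) - Complex.exp (c' * ((i:ℝ) * T))) / c' * φ ξ‖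
          = ‖(Complex.exp (c' * (((i:ℝ)+1) * T)) - Complex.exp (c' * ((i:ℝ) * T))) / c'‖ * ‖φ ξ‖ := by
            rw [norm_mul]
        _ ≤ M * ‖φ ξ‖ := mul_le_mul_of_nonneg_right hfrac (norm_nonneg _)
        _ = ‖((M:ℂ) • φ) ξ‖ := by
            simp [norm_smul, abs_of_nonneg hM0]
    · -- off support
      have hφ0 : φ ξ = 0 := by rw [hφ, Set.indicator_of_notMem hξ]
      simp [hφ0]
  calc ∑ i ∈ Finset.range N,
        eLpNorm (fun ξ : ℝ =>
          ∫ t in ((i : ℝ) * T)..(((i : ℝ) + 1) * T),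
            Complex.exp (Complex.I * (ξ ^ 2) * t) * φ ξ) 2 volume
      ≤ ∑ _i ∈ Finset.range N, ENNReal.ofReal M := Finset.sum_le_sum (fun i _ => key i)
    _ = N * ENNReal.ofReal M := by rw [Finset.sum_const, Finset.card_range, nsmul_eq_mul]
    _ = ENNReal.ofReal (N * M) := by
        rw [ENNReal.ofReal_mul (by positivity)]
        norm_num
    _ ≤ ENNReal.ofReal ε := by
        apply ENNReal.ofReal_le_ofReal
        have : (N:ℝ) * M ≤ (N:ℝ) * (2 * (ε * π / (2 * T * N)) * T / π) := by
          rw [hM]; gcongr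
        apply this.trans
        rw [show (N:ℝ) * (2 * (ε * π / (2 * T * ↑N)) * T / π) = ε * ((2 * T * N) / (2 * T * N)) * (π / π) by ring]
        rw [div_self (by positivity), div_self (by positivity)]
        simp

/-- For the free Schrödinger group, represented on the Fourier side as multiplication by
`e^{iξ²t}` on `L²(ℝ;ℂ)`: for every `T, N, ε` there is a normalized `φ` whose sampled time
averages are all `ε`-small; consequently no weak observability inequality with `δ < 1`
can hold. -/
theorem stmt11 (T : ℝ) (hT : 0 < T) (N : ℕ) (hN : 1 ≤ N) (ε : ℝ) (hε : 0 < ε) :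
    (∃ φ : ℝ → ℂ, MemLp φ 2 volume ∧ eLpNorm φ 2 volume = 1 ∧
      ∑ i ∈ Finset.range N,
        eLpNorm (fun ξ : ℝ =>
          ∫ t in ((i : ℝ) * T)..(((i : ℝ) + 1) * T),
            Complex.exp (Complex.I * (ξ ^ 2) * t) * φ ξ) 2 volume
        ≤ ENNReal.ofReal ε) ∧
    (∀ C : ℝ, 0 ≤ C → ∀ δ : ℝ, δ ∈ Set.Ioo (0 : ℝ) 1 →
      ¬ ∀ φ : ℝ → ℂ, MemLp φ 2 volume →
        (eLpNorm φ 2 volume) ^ 2 ≤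
          ENNReal.ofReal C * ∑ i ∈ Finset.range N,
            (eLpNorm (fun ξ : ℝ =>
              ∫ t in ((i : ℝ) * T)..(((i : ℝ) + 1) * T),
                Complex.exp (Complex.I * (ξ ^ 2) * t) * φ ξ) 2 volume) ^ 2
          + ENNReal.ofReal δ * (eLpNorm φ 2 volume) ^ 2) := by
  constructor
  · exact myaux T hT N hN ε hε
  · intro C hC δ hδ H
    have hNpos : (0:ℝ) < N := by exact_mod_cast hN
    set ε₀ : ℝ := Real.sqrt ((1 - δ) / (2 * (C + 1) * N)) with hε₀
    have hδ1 : δ < 1 := hδ.2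
    have hδ0 : 0 < δ := hδ.1
    have hε₀pos : 0 < ε₀ := Real.sqrt_pos.2 (div_pos (by linarith) (by positivity))
    have hε₀sq : ε₀ ^ 2 = (1 - δ) / (2 * (C + 1) * N) := Real.sq_sqrt (div_pos (by linarith) (by positivity)).le
    obtain ⟨φ, hmem, hnorm, hsum⟩ := myaux T hT N hN ε₀ hε₀pos
    have h1 := H φ hmem
    rw [hnorm] at h1
    simp only [one_pow, mul_one] at h1
    -- bound each square
    have hterm : ∀ i ∈ Finset.range N,
        (eLpNorm (fun ξ : ℝ =>
          ∫ t in ((i : ℝ) * T)..(((i : ℝ) + 1) * T),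
            Complex.exp (Complex.I * (ξ ^ 2) * t) * φ ξ) 2 volume) ^ 2
        ≤ ENNReal.ofReal (ε₀ ^ 2) := by
      intro i hi
      have h2 : eLpNorm (fun ξ : ℝ =>
          ∫ t in ((i : ℝ) * T)..(((i : ℝ) + 1) * T),
            Complex.exp (Complex.I * (ξ ^ 2) * t) * φ ξ) 2 volume ≤ ENNReal.ofReal ε₀ :=
        le_trans (Finset.single_le_sum (f := fun i : ℕ => eLpNorm (fun ξ : ℝ =>
          ∫ t in ((i : ℝ) * T)..(((i : ℝ) + 1) * T),
            Complex.exp (Complex.I * (ξ ^ 2) * t) * φ ξ) 2 volume) (fun _ _ => zero_le) hi) hsum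
      calc _ ≤ (ENNReal.ofReal ε₀) ^ 2 := by gcongr
        _ = ENNReal.ofReal (ε₀ ^ 2) := (ENNReal.ofReal_pow hε₀pos.le 2).symm
    have hsum2 : ∑ i ∈ Finset.range N,
        (eLpNorm (fun ξ : ℝ =>
          ∫ t in ((i : ℝ) * T)..(((i : ℝ) + 1) * T),
            Complex.exp (Complex.I * (ξ ^ 2) * t) * φ ξ) 2 volume) ^ 2
        ≤ ENNReal.ofReal ((N : ℝ) * ε₀ ^ 2) := by
      calc _ ≤ ∑ _i ∈ Finset.range N, ENNReal.ofReal (ε₀ ^ 2) := Finset.sum_le_sum hterm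
        _ = (N : ℝ≥0∞) * ENNReal.ofReal (ε₀ ^ 2) := by
            rw [Finset.sum_const, Finset.card_range, nsmul_eq_mul]
        _ = ENNReal.ofReal ((N : ℝ) * ε₀ ^ 2) := by
            rw [ENNReal.ofReal_mul (by positivity), ENNReal.ofReal_natCast]
    have h3 : (1 : ℝ≥0∞) ≤ ENNReal.ofReal (C * ((N : ℝ) * ε₀ ^ 2) + δ) := by
      refine le_trans h1 ?_
      rw [ENNReal.ofReal_add (by positivity) hδ0.le, ENNReal.ofReal_mul hC]
      gcongr
    have h4 : C * ((N : ℝ) * ε₀ ^ 2) + δ < 1 := by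
      rw [hε₀sq]
      have hD : (0:ℝ) < 2 * (C + 1) * N := by positivity
      rw [show C * ((N:ℝ) * ((1 - δ) / (2 * (C + 1) * N))) = C * (1 - δ) / (2 * (C + 1)) by
        field_simp]
      have : C * (1 - δ) / (2 * (C + 1)) < (1 - δ) := by
        rw [div_lt_iff₀ (by positivity)]
        nlinarith
      linarith
    have h5 : ENNReal.ofReal (C * ((N : ℝ) * ε₀ ^ 2) + δ) < 1 := by
      exact ENNReal.ofReal_lt_one.2 h4
    exact absurd h3 (not_le.2 h5)
end

section
/- Let Y, U be Hilbert spaces, R ∈ L(Y), O ∈ L(Y;Z) for a Hilbert space Z, and suppose ‖Rz‖² ≤ C‖Oz‖² + δ‖z‖² for all z ∈ Y, where C > 0 and δ ∈ (0,1). Then for each y₀ ∈ Y there exists v ∈ Z such that (1/C)‖v‖² + (1/δ)‖R*y₀ - O*v‖² ≤ ‖y₀‖². -/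
open RealInnerProductSpace

set_option maxHeartbeats 1000000

/-- Duality lemma: a weak observability inequality `‖Rz‖² ≤ C‖Oz‖² + δ‖z‖²` yields, for
each `y₀`, a `v` with `(1/C)‖v‖² + (1/δ)‖R*y₀ - O*v‖² ≤ ‖y₀‖²`. -/
theorem stmt13 {Y Z : Type*}
    [NormedAddCommGroup Y] [InnerProductSpace ℝ Y] [CompleteSpace Y]
    [NormedAddCommGroup Z] [InnerProductSpace ℝ Z] [CompleteSpace Z]
    (R : Y →L[ℝ] Y) (O : Y →L[ℝ] Z) (C δ : ℝ) (hC : 0 < C) (hδ : δ ∈ Set.Ioo (0:ℝ) 1)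
    (hobs : ∀ z : Y, ‖R z‖ ^ 2 ≤ C * ‖O z‖ ^ 2 + δ * ‖z‖ ^ 2) :
    ∀ y₀ : Y, ∃ v : Z,
      (1 / C) * ‖v‖ ^ 2 +
        (1 / δ) * ‖(ContinuousLinearMap.adjoint R) y₀ -
          (ContinuousLinearMap.adjoint O) v‖ ^ 2 ≤ ‖y₀‖ ^ 2 := by
  obtain ⟨hδ0, hδ1⟩ := hδ
  intro y₀
  -- The operator A = C O*O + δ I and the bilinear form B z w = ⟪A z, w⟫.
  set A : Y →L[ℝ] Y :=
    C • ((ContinuousLinearMap.adjoint O).comp O) + δ • ContinuousLinearMap.id ℝ Y with hA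
  set B : Y →L[ℝ] Y →L[ℝ] ℝ := (innerSL ℝ).comp A with hB
  have hBapp : ∀ z w : Y, B z w = C * ⟪O z, O w⟫ + δ * ⟪z, w⟫ := by
    intro z w
    simp only [hB, hA, ContinuousLinearMap.comp_apply, innerSL_apply_apply,
      ContinuousLinearMap.add_apply, ContinuousLinearMap.smul_apply,
      ContinuousLinearMap.id_apply, inner_add_left, inner_smul_left,
      ContinuousLinearMap.adjoint_inner_left]
    simp only [starRingEnd_apply, star_trivial]
    try ring
  have coercive : IsCoercive B := by
    refine ⟨δ, hδ0, fun z => ?_⟩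
    rw [hBapp]
    have h1 : (0:ℝ) ≤ C * ⟪O z, O z⟫ := by
      have := real_inner_self_nonneg (x := O z)
      positivity
    have h2 : δ * ⟪z, z⟫ = δ * (‖z‖ * ‖z‖) := by rw [real_inner_self_eq_norm_mul_norm]
    nlinarith
  -- minimizer z̄ solving A z̄ = R* y₀
  set zb : Y := coercive.continuousLinearEquivOfBilin.symm ((ContinuousLinearMap.adjoint R) y₀)
    with hzb
  have hEL : ∀ w : Y, ⟪(ContinuousLinearMap.adjoint R) y₀, w⟫ = B zb w := by
    intro w
    have : coercive.continuousLinearEquivOfBilin zb = (ContinuousLinearMap.adjoint R) y₀ :=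
      coercive.continuousLinearEquivOfBilin.apply_symm_apply _
    rw [← this, coercive.continuousLinearEquivOfBilin_apply]
  set Q : ℝ := C * ‖O zb‖ ^ 2 + δ * ‖zb‖ ^ 2 with hQ
  have hQnn : 0 ≤ Q := by positivity
  have hQeq : ⟪y₀, R zb⟫ = Q := by
    have h1 := hEL zb
    rw [hBapp, ContinuousLinearMap.adjoint_inner_left] at h1
    rw [h1, hQ, real_inner_self_eq_norm_sq, real_inner_self_eq_norm_sq]
  have hQle : Q ≤ ‖y₀‖ ^ 2 := by
    have h1 : Q ≤ ‖y₀‖ * ‖R zb‖ := hQeq ▸ real_inner_le_norm y₀ (R zb)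
    have h2 : ‖R zb‖ ^ 2 ≤ Q := hobs zb
    have h3 : Q ^ 2 ≤ (‖y₀‖ * ‖R zb‖) ^ 2 := pow_le_pow_left₀ hQnn h1 2
    have h4 : (‖y₀‖ * ‖R zb‖) ^ 2 = ‖y₀‖ ^ 2 * ‖R zb‖ ^ 2 := by ring
    have h5 : ‖y₀‖ ^ 2 * ‖R zb‖ ^ 2 ≤ ‖y₀‖ ^ 2 * Q :=
      mul_le_mul_of_nonneg_left h2 (sq_nonneg _)
    rcases eq_or_lt_of_le hQnn with hz | hz
    · rw [← hz]; positivity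
    · have h6 : Q * Q ≤ ‖y₀‖ ^ 2 * Q := by nlinarith
      exact le_of_mul_le_mul_right h6 hz
  refine ⟨C • O zb, ?_⟩
  have hkey : (ContinuousLinearMap.adjoint R) y₀ - (ContinuousLinearMap.adjoint O) (C • O zb)
      = δ • zb := by
    apply ext_inner_right ℝ
    intro w
    rw [inner_sub_left, hEL w, hBapp, inner_smul_left, ContinuousLinearMap.adjoint_inner_left,
      inner_smul_left]
    simp only [starRingEnd_apply, star_trivial]
    ring
  rw [hkey]
  have h1 : ‖C • O zb‖ ^ 2 = C ^ 2 * ‖O zb‖ ^ 2 := by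
    rw [norm_smul, Real.norm_eq_abs, abs_of_pos hC, mul_pow]
  have h2 : ‖δ • zb‖ ^ 2 = δ ^ 2 * ‖zb‖ ^ 2 := by
    rw [norm_smul, Real.norm_eq_abs, abs_of_pos hδ0, mul_pow]
  rw [h1, h2]
  have : (1 / C) * (C ^ 2 * ‖O zb‖ ^ 2) + (1 / δ) * (δ ^ 2 * ‖zb‖ ^ 2) = Q := by
    rw [hQ]; field_simp
  linarith [this ▸ hQle]
end

section
/- Let {S(t)}_{t≥0} be a C₀-semigroup on Y, B ∈ L(U;Y), T > 0, and suppose the set 𝒯 := {T > 0 : there exist N ∈ ℕ⁺, δ ∈ (0,1), C ≥ 0 with ‖S(NT)*φ‖² ≤ C Σ_{i=1}^N ‖∫_{(i-1)T}^{iT} B*S(t)*φ dt‖² + δ‖φ‖² for all φ ∈ Y}. Then 𝒯 is an open subset of (0,∞). -/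
open scoped BigOperators

set_option maxHeartbeats 1000000 in
private theorem stmt16_aux {Y G : Type*}
    [NormedAddCommGroup Y] [InnerProductSpace ℝ Y]
    [NormedAddCommGroup G] [NormedSpace ℝ G] [CompleteSpace G]
    (A : ℝ → Y →L[ℝ] Y) (g : ℝ → Y → G)
    (hA0 : ∀ φ : Y, A 0 φ = φ)
    (hAcomp : ∀ s t : ℝ, 0 ≤ s → 0 ≤ t → ∀ φ : Y, A (s + t) φ = A t (A s φ))
    (hAbd : ∀ a : ℝ, ∃ Ma : ℝ, 0 ≤ Ma ∧ ∀ φ : Y, ∀ t ∈ Set.Icc (0:ℝ) a, ‖A t φ‖ ≤ Ma * ‖φ‖)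
    (hgshift : ∀ s t : ℝ, 0 ≤ s → 0 ≤ t → ∀ φ : Y, g t (A s φ) = g (t + s) φ)
    (hgcont : ∀ φ : Y, Continuous fun t => g t φ)
    (hgbd : ∀ a : ℝ, ∃ Ka : ℝ, 0 ≤ Ka ∧ ∀ φ : Y, ∀ t ∈ Set.Icc (0:ℝ) a, ‖g t φ‖ ≤ Ka * ‖φ‖) :
    IsOpen {T : ℝ | 0 < T ∧ ∃ N : ℕ, 1 ≤ N ∧ ∃ δ ∈ Set.Ioo (0 : ℝ) 1, ∃ C : ℝ, 0 ≤ C ∧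
      ∀ φ : Y, ‖A ((N : ℝ) * T) φ‖ ^ 2 ≤
        C * ∑ i ∈ Finset.range N, ‖∫ t in ((i : ℝ) * T)..(((i : ℝ) + 1) * T), g t φ‖ ^ 2
        + δ * ‖φ‖ ^ 2} := by
  rw [Metric.isOpen_iff]
  rintro T₀ ⟨hT₀, N₀, hN₀, δ₀, ⟨hδ₀0, hδ₀1⟩, C₀, hC₀, hineq⟩
  have hint : ∀ (φ : Y) (a b : ℝ), IntervalIntegrable (fun t => g t φ)
      MeasureTheory.volume a b := fun φ a b => (hgcont φ).intervalIntegrable a b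
  set J : ℝ → ℕ → Y → G := fun T i φ => ∫ t in ((i : ℝ) * T)..(((i : ℝ) + 1) * T), g t φ
    with hJdef
  have hineq' : ∀ φ : Y, ‖A ((N₀ : ℝ) * T₀) φ‖ ^ 2 ≤
      C₀ * ∑ i ∈ Finset.range N₀, ‖J T₀ i φ‖ ^ 2 + δ₀ * ‖φ‖ ^ 2 := hineq
  -- Step 1: the iterated (self-improved) inequality at sampling time T₀.
  have iter : ∀ m : ℕ, ∃ C : ℝ, 0 ≤ C ∧ ∀ φ : Y,
      ‖A (((m * N₀ : ℕ) : ℝ) * T₀) φ‖ ^ 2 ≤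
        C * ∑ i ∈ Finset.range (m * N₀), ‖J T₀ i φ‖ ^ 2 + δ₀ ^ m * ‖φ‖ ^ 2 := by
    intro m
    induction m with
    | zero =>
      refine ⟨0, le_refl _, fun φ => ?_⟩
      have h0 : (((0 * N₀ : ℕ) : ℝ) * T₀) = 0 := by norm_num
      rw [h0, hA0 φ]
      simp
    | succ m ih =>
      obtain ⟨C, hC, hrec⟩ := ih
      refine ⟨C₀ + δ₀ * C, by positivity, fun φ => ?_⟩
      have hc1 : (0:ℝ) ≤ ((m * N₀ : ℕ) : ℝ) * T₀ := by positivity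
      have hc2 : (0:ℝ) ≤ (N₀ : ℝ) * T₀ := by positivity
      have htime : (((m+1) * N₀ : ℕ) : ℝ) * T₀
          = ((m * N₀ : ℕ) : ℝ) * T₀ + (N₀ : ℝ) * T₀ := by push_cast; ring
      have h1 : A ((((m+1) * N₀ : ℕ) : ℝ) * T₀) φ
          = A ((N₀ : ℝ) * T₀) (A (((m * N₀ : ℕ) : ℝ) * T₀) φ) := by
        rw [htime]; exact hAcomp _ _ hc1 hc2 φ
      have hshift : ∀ i : ℕ,
          J T₀ i (A (((m * N₀ : ℕ) : ℝ) * T₀) φ) = J T₀ (m * N₀ + i) φ := by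
        intro i
        have hcg : Set.EqOn (fun t => g t (A (((m * N₀ : ℕ) : ℝ) * T₀) φ))
            (fun t => g (t + ((m * N₀ : ℕ) : ℝ) * T₀) φ)
            (Set.uIcc ((i : ℝ) * T₀) (((i : ℝ) + 1) * T₀)) := by
          intro t ht
          have hp1 : (0:ℝ) ≤ (i : ℝ) * T₀ := by positivity
          have hp2 : (0:ℝ) ≤ ((i : ℝ) + 1) * T₀ := by positivity
          have h0t : 0 ≤ t := by
            rcases Set.mem_uIcc.mp ht with h | h
            · linarith [h.1]
            · linarith [h.1]
          exact hgshift _ _ hc1 h0t φ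
        have e1 : (i : ℝ) * T₀ + ((m * N₀ : ℕ) : ℝ) * T₀
            = ((m * N₀ + i : ℕ) : ℝ) * T₀ := by push_cast; ring
        have e2 : ((i : ℝ) + 1) * T₀ + ((m * N₀ : ℕ) : ℝ) * T₀
            = (((m * N₀ + i : ℕ) : ℝ) + 1) * T₀ := by push_cast; ring
        calc J T₀ i (A (((m * N₀ : ℕ) : ℝ) * T₀) φ)
            = ∫ t in ((i : ℝ) * T₀)..(((i : ℝ) + 1) * T₀),
                g (t + ((m * N₀ : ℕ) : ℝ) * T₀) φ :=
              intervalIntegral.integral_congr hcg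
          _ = ∫ t in ((i : ℝ) * T₀ + ((m * N₀ : ℕ) : ℝ) * T₀)..(((i : ℝ) + 1) * T₀
                + ((m * N₀ : ℕ) : ℝ) * T₀), g t φ :=
              intervalIntegral.integral_comp_add_right (fun t => g t φ) (((m * N₀ : ℕ) : ℝ) * T₀)
          _ = J T₀ (m * N₀ + i) φ := by rw [hJdef, e1, e2]
      have hrank : ∑ i ∈ Finset.range ((m + 1) * N₀), ‖J T₀ i φ‖ ^ 2
          = ∑ i ∈ Finset.range (m * N₀), ‖J T₀ i φ‖ ^ 2
            + ∑ i ∈ Finset.range N₀, ‖J T₀ (m * N₀ + i) φ‖ ^ 2 := by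
        rw [add_mul, one_mul, Finset.sum_range_add]
      have hψ := hineq' (A (((m * N₀ : ℕ) : ℝ) * T₀) φ)
      simp only [hshift] at hψ
      have hs1 : 0 ≤ ∑ i ∈ Finset.range (m * N₀), ‖J T₀ i φ‖ ^ 2 :=
        Finset.sum_nonneg fun i _ => by positivity
      have hs2 : 0 ≤ ∑ i ∈ Finset.range N₀, ‖J T₀ (m * N₀ + i) φ‖ ^ 2 :=
        Finset.sum_nonneg fun i _ => by positivity
      have hrec' := mul_le_mul_of_nonneg_left (hrec φ) hδ₀0.le
      rw [h1, hrank]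
      nlinarith [hψ, hrec', mul_nonneg hC₀ hs1, mul_nonneg (mul_nonneg hδ₀0.le hC) hs2,
        pow_succ δ₀ m]
  -- Step 2: constants
  obtain ⟨Ma, hMa0, hMa⟩ := hAbd ((N₀ : ℝ) * (T₀ + 1))
  set M₁ : ℝ := max Ma 1 with hM₁def
  have hM₁1 : (1:ℝ) ≤ M₁ := le_max_right _ _
  have hM₁0 : (0:ℝ) ≤ M₁ := by linarith
  have hM₁ : ∀ φ : Y, ∀ t ∈ Set.Icc (0:ℝ) ((N₀ : ℝ) * (T₀ + 1)), ‖A t φ‖ ≤ M₁ * ‖φ‖ :=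
    fun φ t ht => (hMa φ t ht).trans
      (mul_le_mul_of_nonneg_right (le_max_left _ _) (norm_nonneg _))
  obtain ⟨k, hk⟩ := exists_pow_lt_of_lt_one
    (show (0:ℝ) < (1/4) / M₁ ^ 2 by positivity) hδ₀1
  have hkey : M₁ ^ 2 * δ₀ ^ k ≤ 1 / 4 := by
    have := (lt_div_iff₀ (show (0:ℝ) < M₁ ^ 2 by positivity)).mp hk
    linarith
  set N : ℕ := (k + 1) * N₀ with hNdef
  have hN1 : 1 ≤ N := Nat.mul_pos k.succ_pos hN₀
  obtain ⟨Ck, hCk0, hCk⟩ := iter k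
  obtain ⟨Ka, hKa0, hKa⟩ := hgbd ((N : ℝ) * (T₀ + 1))
  obtain ⟨Q, hQdef⟩ : ∃ q : ℝ, q = 2 * M₁ ^ 2 * Ck * (N : ℝ) * (2 * (N : ℝ) * Ka) ^ 2 :=
    ⟨_, rfl⟩
  have hQ0 : 0 ≤ Q := by
    rw [hQdef]
    exact mul_nonneg (mul_nonneg (mul_nonneg (by positivity) hCk0) (Nat.cast_nonneg N))
      (sq_nonneg _)
  have hkR : (0:ℝ) < (k:ℝ) + 1 := by positivity
  obtain ⟨ε, hεdef⟩ : ∃ e : ℝ, e = min (min T₀ 1 / ((k:ℝ) + 1)) (1 / (4 * (Q + 1))) :=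
    ⟨_, rfl⟩
  have hε : 0 < ε := by
    rw [hεdef]
    exact lt_min (div_pos (lt_min hT₀ one_pos) hkR) (by positivity)
  refine ⟨ε, hε, fun T hT => ?_⟩
  have hdist : |T - T₀| < ε := by
    rw [Metric.mem_ball, Real.dist_eq] at hT; exact hT
  have habs := abs_lt.mp hdist
  have hεm : ((k:ℝ) + 1) * ε ≤ min T₀ 1 := by
    have h1 : ε ≤ min T₀ 1 / ((k:ℝ) + 1) := hεdef ▸ min_le_left _ _
    calc ((k:ℝ) + 1) * ε ≤ ((k:ℝ) + 1) * (min T₀ 1 / ((k:ℝ) + 1)) :=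
          mul_le_mul_of_nonneg_left h1 hkR.le
      _ = min T₀ 1 := by field_simp
  have hεQ : ε ≤ 1 / (4 * (Q + 1)) := hεdef ▸ min_le_right _ _
  have hε1 : ε ≤ 1 := by
    have h4 : 1 / (4 * (Q + 1)) ≤ 1 := by
      rw [div_le_one (by linarith)]; linarith
    linarith
  have hεT₀ : ε ≤ T₀ := by
    have h1 : ((k:ℝ) + 1) * ε ≤ T₀ := hεm.trans (min_le_left _ _)
    nlinarith [mul_nonneg (Nat.cast_nonneg k : (0:ℝ) ≤ (k:ℝ)) hε.le]
  have hTpos : 0 < T := by linarith [habs.1]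
  have hTub : T ≤ T₀ + 1 := by linarith [habs.2, hε1]
  have hmd1 : -T₀ ≤ ((k:ℝ) + 1) * (T - T₀) := by
    have h1 : ((k:ℝ) + 1) * ε ≤ T₀ := hεm.trans (min_le_left _ _)
    have h2 := mul_lt_mul_of_pos_left habs.1 hkR
    linarith
  have hmd2 : ((k:ℝ) + 1) * (T - T₀) ≤ 1 := by
    have h1 : ((k:ℝ) + 1) * ε ≤ 1 := hεm.trans (min_le_right _ _)
    have h2 := mul_lt_mul_of_pos_left habs.2 hkR
    linarith
  have hc0 : (0:ℝ) ≤ ((k * N₀ : ℕ) : ℝ) * T₀ := by positivity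
  have hexpr : (N : ℝ) * T - ((k * N₀ : ℕ) : ℝ) * T₀
      = (N₀ : ℝ) * (T₀ + ((k:ℝ) + 1) * (T - T₀)) := by
    rw [hNdef]; push_cast; ring
  have hr0 : 0 ≤ (N : ℝ) * T - ((k * N₀ : ℕ) : ℝ) * T₀ := by
    rw [hexpr]
    have : (0:ℝ) ≤ T₀ + ((k:ℝ) + 1) * (T - T₀) := by linarith
    positivity
  have hrub : (N : ℝ) * T - ((k * N₀ : ℕ) : ℝ) * T₀ ≤ (N₀ : ℝ) * (T₀ + 1) := by
    rw [hexpr]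
    have h2 : T₀ + ((k:ℝ) + 1) * (T - T₀) ≤ T₀ + 1 := by linarith
    exact mul_le_mul_of_nonneg_left h2 (Nat.cast_nonneg N₀)
  -- Step 3: comparison of grid integrals
  have hkN : ((k * N₀ : ℕ) : ℝ) ≤ (N : ℝ) := by
    have : k * N₀ ≤ N := by rw [hNdef]; exact Nat.mul_le_mul (Nat.le_succ k) (le_refl N₀)
    exact_mod_cast this
  have hkNn : k * N₀ ≤ N := by
    rw [hNdef]; exact Nat.mul_le_mul (Nat.le_succ k) (le_refl N₀)
  have hN0R : (0:ℝ) ≤ (N : ℝ) := Nat.cast_nonneg N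
  have claim3 : ∀ i : ℕ, i < k * N₀ → ∀ φ : Y,
      ‖J T₀ i φ‖ ≤ ‖J T i φ‖ + Ka * ‖φ‖ * ((N:ℝ) * ε) + Ka * ‖φ‖ * ((N:ℝ) * ε) := by
    intro i hi φ
    have hiN : (i : ℝ) + 1 ≤ (N : ℝ) := by
      have : i + 1 ≤ N := le_trans (Nat.succ_le_of_lt hi) hkNn
      exact_mod_cast this
    have hi0 : (0:ℝ) ≤ (i : ℝ) := Nat.cast_nonneg i
    have hub : ∀ j τ : ℝ, 0 ≤ j → j ≤ (N:ℝ) → 0 < τ → τ ≤ T₀ + 1 →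
        j * τ ≤ (N:ℝ) * (T₀ + 1) := by
      intro j τ hj0 hjN hτ0 hτ1
      calc j * τ ≤ j * (T₀ + 1) := mul_le_mul_of_nonneg_left hτ1 hj0
        _ ≤ (N:ℝ) * (T₀ + 1) := mul_le_mul_of_nonneg_right hjN (by linarith)
    have hpiece : ∀ x y : ℝ, 0 ≤ x → x ≤ (N:ℝ) * (T₀ + 1) → 0 ≤ y →
        y ≤ (N:ℝ) * (T₀ + 1) → ‖∫ t in x..y, g t φ‖ ≤ Ka * ‖φ‖ * |y - x| := by
      intro x y hx0 hx1 hy0 hy1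
      apply intervalIntegral.norm_integral_le_of_norm_le_const
      intro t ht
      exact hKa φ t (Set.uIcc_subset_Icc ⟨hx0, hx1⟩ ⟨hy0, hy1⟩ (Set.uIoc_subset_uIcc ht))
    have ha0u : (i:ℝ) * T₀ ≤ (N:ℝ) * (T₀ + 1) := hub _ _ hi0 (by linarith) hT₀ (by linarith)
    have ha1u : (i:ℝ) * T ≤ (N:ℝ) * (T₀ + 1) := hub _ _ hi0 (by linarith) hTpos hTub
    have hb1u : ((i:ℝ) + 1) * T ≤ (N:ℝ) * (T₀ + 1) := hub _ _ (by linarith) hiN hTpos hTub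
    have hb0u : ((i:ℝ) + 1) * T₀ ≤ (N:ℝ) * (T₀ + 1) := hub _ _ (by linarith) hiN hT₀ (by linarith)
    have ha00 : (0:ℝ) ≤ (i:ℝ) * T₀ := by positivity
    have ha10 : (0:ℝ) ≤ (i:ℝ) * T := by positivity
    have hb10 : (0:ℝ) ≤ ((i:ℝ) + 1) * T := by positivity
    have hb00 : (0:ℝ) ≤ ((i:ℝ) + 1) * T₀ := by positivity
    have e1 : (∫ t in ((i:ℝ) * T)..(((i:ℝ) + 1) * T), g t φ)
        + (∫ t in (((i:ℝ) + 1) * T)..(((i:ℝ) + 1) * T₀), g t φ)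
        = ∫ t in ((i:ℝ) * T)..(((i:ℝ) + 1) * T₀), g t φ :=
      intervalIntegral.integral_add_adjacent_intervals (hint φ _ _) (hint φ _ _)
    have e2 : (∫ t in ((i:ℝ) * T₀)..((i:ℝ) * T), g t φ)
        + (∫ t in ((i:ℝ) * T)..(((i:ℝ) + 1) * T₀), g t φ)
        = ∫ t in ((i:ℝ) * T₀)..(((i:ℝ) + 1) * T₀), g t φ :=
      intervalIntegral.integral_add_adjacent_intervals (hint φ _ _) (hint φ _ _)
    have hsplit : J T₀ i φ = (∫ t in ((i:ℝ) * T₀)..((i:ℝ) * T), g t φ)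
        + ((∫ t in ((i:ℝ) * T)..(((i:ℝ) + 1) * T), g t φ)
          + (∫ t in (((i:ℝ) + 1) * T)..(((i:ℝ) + 1) * T₀), g t φ)) := by
      rw [e1, e2]
    have habs1 : |(i:ℝ) * T - (i:ℝ) * T₀| ≤ (N:ℝ) * ε := by
      rw [← mul_sub, abs_mul, abs_of_nonneg hi0]
      exact mul_le_mul (by linarith) hdist.le (abs_nonneg _) hN0R
    have habs2 : |((i:ℝ) + 1) * T₀ - ((i:ℝ) + 1) * T| ≤ (N:ℝ) * ε := by
      rw [← mul_sub, abs_mul, abs_of_nonneg (by linarith : (0:ℝ) ≤ (i:ℝ) + 1),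
        abs_sub_comm]
      exact mul_le_mul hiN hdist.le (abs_nonneg _) hN0R
    have hp1 : ‖∫ t in ((i:ℝ) * T₀)..((i:ℝ) * T), g t φ‖ ≤ Ka * ‖φ‖ * ((N:ℝ) * ε) :=
      (hpiece _ _ ha00 ha0u ha10 ha1u).trans
        (mul_le_mul_of_nonneg_left habs1 (by positivity))
    have hp3 : ‖∫ t in (((i:ℝ) + 1) * T)..(((i:ℝ) + 1) * T₀), g t φ‖
        ≤ Ka * ‖φ‖ * ((N:ℝ) * ε) :=
      (hpiece _ _ hb10 hb1u hb00 hb0u).trans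
        (mul_le_mul_of_nonneg_left habs2 (by positivity))
    calc ‖J T₀ i φ‖ = ‖(∫ t in ((i:ℝ) * T₀)..((i:ℝ) * T), g t φ)
        + ((∫ t in ((i:ℝ) * T)..(((i:ℝ) + 1) * T), g t φ)
          + (∫ t in (((i:ℝ) + 1) * T)..(((i:ℝ) + 1) * T₀), g t φ))‖ := by rw [← hsplit]
      _ ≤ ‖∫ t in ((i:ℝ) * T₀)..((i:ℝ) * T), g t φ‖
          + (‖∫ t in ((i:ℝ) * T)..(((i:ℝ) + 1) * T), g t φ‖
            + ‖∫ t in (((i:ℝ) + 1) * T)..(((i:ℝ) + 1) * T₀), g t φ‖) :=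
        (norm_add_le _ _).trans (by gcongr; exact norm_add_le _ _)
      _ ≤ Ka * ‖φ‖ * ((N:ℝ) * ε) + (‖J T i φ‖ + Ka * ‖φ‖ * ((N:ℝ) * ε)) := by
        gcongr
      _ = ‖J T i φ‖ + Ka * ‖φ‖ * ((N:ℝ) * ε) + Ka * ‖φ‖ * ((N:ℝ) * ε) := by ring
  -- Step 4: conclude
  have hQε : Q * ε ^ 2 ≤ 1 / 4 := by
    have h1 : Q * ε ≤ Q * (1 / (4 * (Q + 1))) := mul_le_mul_of_nonneg_left hεQ hQ0
    have h2 : Q * (1 / (4 * (Q + 1))) ≤ 1 / 4 := by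
      rw [mul_one_div, div_le_div_iff₀ (by linarith) (by norm_num)]
      linarith
    nlinarith [mul_le_mul_of_nonneg_left hε1 (mul_nonneg hQ0 hε.le)]
  refine ⟨hTpos, N, hN1, 1/2, ⟨by norm_num, by norm_num⟩, 2 * M₁ ^ 2 * Ck,
    mul_nonneg (by positivity) hCk0, fun φ => ?_⟩
  show ‖A ((N:ℝ) * T) φ‖ ^ 2 ≤ 2 * M₁ ^ 2 * Ck * ∑ i ∈ Finset.range N, ‖J T i φ‖ ^ 2
    + 1/2 * ‖φ‖ ^ 2
  have hstep1 : ‖A ((N:ℝ) * T) φ‖ ^ 2 ≤ M₁ ^ 2 * ‖A (((k * N₀ : ℕ) : ℝ) * T₀) φ‖ ^ 2 := by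
    have hd : A ((N:ℝ) * T) φ = A ((N:ℝ) * T - ((k * N₀ : ℕ) : ℝ) * T₀)
        (A (((k * N₀ : ℕ) : ℝ) * T₀) φ) := by
      conv_lhs => rw [show (N:ℝ) * T = ((k * N₀ : ℕ) : ℝ) * T₀
        + ((N:ℝ) * T - ((k * N₀ : ℕ) : ℝ) * T₀) by ring]
      exact hAcomp _ _ hc0 hr0 φ
    have h2 : ‖A ((N:ℝ) * T) φ‖ ≤ M₁ * ‖A (((k * N₀ : ℕ) : ℝ) * T₀) φ‖ := by
      rw [hd]; exact hM₁ _ _ ⟨hr0, hrub⟩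
    have := pow_le_pow_left₀ (norm_nonneg _) h2 2
    rw [mul_pow] at this
    exact this
  have hstep2 := hCk φ
  have hsum1 : ∑ i ∈ Finset.range (k * N₀), ‖J T₀ i φ‖ ^ 2
      ≤ ∑ i ∈ Finset.range (k * N₀),
        (2 * ‖J T i φ‖ ^ 2 + 2 * (Ka * ‖φ‖ * ((N:ℝ) * ε) + Ka * ‖φ‖ * ((N:ℝ) * ε)) ^ 2) := by
    refine Finset.sum_le_sum fun i hi => ?_
    have h3 := claim3 i (Finset.mem_range.mp hi) φ
    nlinarith [norm_nonneg (J T i φ), norm_nonneg (J T₀ i φ),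
      mul_nonneg (mul_nonneg hKa0 (norm_nonneg φ)) (mul_nonneg hN0R hε.le),
      sq_nonneg (‖J T i φ‖ - 2 * (Ka * ‖φ‖ * ((N:ℝ) * ε)))]
  have hsum2 : ∑ i ∈ Finset.range (k * N₀),
      (2 * ‖J T i φ‖ ^ 2 + 2 * (Ka * ‖φ‖ * ((N:ℝ) * ε) + Ka * ‖φ‖ * ((N:ℝ) * ε)) ^ 2)
      = 2 * ∑ i ∈ Finset.range (k * N₀), ‖J T i φ‖ ^ 2
        + ((k * N₀ : ℕ) : ℝ) * (2 * (Ka * ‖φ‖ * ((N:ℝ) * ε) + Ka * ‖φ‖ * ((N:ℝ) * ε)) ^ 2) := by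
    rw [Finset.sum_add_distrib, Finset.sum_const, Finset.card_range, nsmul_eq_mul,
      ← Finset.mul_sum]
  have hsum3 : ∑ i ∈ Finset.range (k * N₀), ‖J T i φ‖ ^ 2
      ≤ ∑ i ∈ Finset.range N, ‖J T i φ‖ ^ 2 :=
    Finset.sum_le_sum_of_subset_of_nonneg (Finset.range_subset_range.mpr hkNn)
      (fun i _ _ => by positivity)
  have hX0 : 0 ≤ ∑ i ∈ Finset.range N, ‖J T i φ‖ ^ 2 :=
    Finset.sum_nonneg fun i _ => by positivity
  have hδk0 : (0:ℝ) ≤ δ₀ ^ k := by positivity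
  have hf0 : (0:ℝ) ≤ ‖φ‖ ^ 2 := by positivity
  have hcoef : M₁ ^ 2 * (Ck * ((N:ℝ) * (2 * (Ka * ‖φ‖ * ((N:ℝ) * ε)
      + Ka * ‖φ‖ * ((N:ℝ) * ε)) ^ 2))) = Q * ε ^ 2 * ‖φ‖ ^ 2 := by
    rw [hQdef]; ring
  have hmid : ‖A (((k * N₀ : ℕ) : ℝ) * T₀) φ‖ ^ 2
      ≤ Ck * (2 * ∑ i ∈ Finset.range N, ‖J T i φ‖ ^ 2
        + (N:ℝ) * (2 * (Ka * ‖φ‖ * ((N:ℝ) * ε) + Ka * ‖φ‖ * ((N:ℝ) * ε)) ^ 2))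
        + δ₀ ^ k * ‖φ‖ ^ 2 := by
    have h4 : ∑ i ∈ Finset.range (k * N₀), ‖J T₀ i φ‖ ^ 2
        ≤ 2 * ∑ i ∈ Finset.range N, ‖J T i φ‖ ^ 2
          + (N:ℝ) * (2 * (Ka * ‖φ‖ * ((N:ℝ) * ε) + Ka * ‖φ‖ * ((N:ℝ) * ε)) ^ 2) := by
      refine (hsum1.trans_eq hsum2).trans ?_
      have hc2 : (0:ℝ) ≤ 2 * (Ka * ‖φ‖ * ((N:ℝ) * ε) + Ka * ‖φ‖ * ((N:ℝ) * ε)) ^ 2 := by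
        positivity
      have := mul_le_mul_of_nonneg_right hkN hc2
      linarith [hsum3]
    calc ‖A (((k * N₀ : ℕ) : ℝ) * T₀) φ‖ ^ 2
        ≤ Ck * ∑ i ∈ Finset.range (k * N₀), ‖J T₀ i φ‖ ^ 2 + δ₀ ^ k * ‖φ‖ ^ 2 := hstep2
      _ ≤ Ck * (2 * ∑ i ∈ Finset.range N, ‖J T i φ‖ ^ 2
          + (N:ℝ) * (2 * (Ka * ‖φ‖ * ((N:ℝ) * ε) + Ka * ‖φ‖ * ((N:ℝ) * ε)) ^ 2))
          + δ₀ ^ k * ‖φ‖ ^ 2 := by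
        have := mul_le_mul_of_nonneg_left h4 hCk0
        linarith
  calc ‖A ((N:ℝ) * T) φ‖ ^ 2
      ≤ M₁ ^ 2 * ‖A (((k * N₀ : ℕ) : ℝ) * T₀) φ‖ ^ 2 := hstep1
    _ ≤ M₁ ^ 2 * (Ck * (2 * ∑ i ∈ Finset.range N, ‖J T i φ‖ ^ 2
        + (N:ℝ) * (2 * (Ka * ‖φ‖ * ((N:ℝ) * ε) + Ka * ‖φ‖ * ((N:ℝ) * ε)) ^ 2))
        + δ₀ ^ k * ‖φ‖ ^ 2) :=
      mul_le_mul_of_nonneg_left hmid (by positivity)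
    _ = 2 * M₁ ^ 2 * Ck * ∑ i ∈ Finset.range N, ‖J T i φ‖ ^ 2
        + Q * ε ^ 2 * ‖φ‖ ^ 2 + M₁ ^ 2 * δ₀ ^ k * ‖φ‖ ^ 2 := by
      rw [hQdef]; ring
    _ ≤ 2 * M₁ ^ 2 * Ck * ∑ i ∈ Finset.range N, ‖J T i φ‖ ^ 2
        + 1/4 * ‖φ‖ ^ 2 + 1/4 * ‖φ‖ ^ 2 := by
      have h5 := mul_le_mul_of_nonneg_right hQε hf0
      have h6 := mul_le_mul_of_nonneg_right hkey hf0
      linarith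
    _ = 2 * M₁ ^ 2 * Ck * ∑ i ∈ Finset.range N, ‖J T i φ‖ ^ 2 + 1/2 * ‖φ‖ ^ 2 := by ring


/-- The set of sampling periods `T > 0` for which the discrete weak observability
inequality (characterizing (DC)_T-stabilizability) holds is open in `ℝ`. -/
theorem stmt16 {Y U : Type*}
    [NormedAddCommGroup Y] [InnerProductSpace ℝ Y] [CompleteSpace Y]
    [NormedAddCommGroup U] [InnerProductSpace ℝ U] [CompleteSpace U]
    (S : ℝ → Y →L[ℝ] Y)
    (hS0 : S 0 = ContinuousLinearMap.id ℝ Y)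
    (hsemi : ∀ s t : ℝ, 0 ≤ s → 0 ≤ t → S (s + t) = (S s).comp (S t))
    (hcont : ∀ φ : Y, Continuous fun t : ℝ => (ContinuousLinearMap.adjoint (S t)) φ)
    (hbdd : ∀ a : ℝ, ∃ Ma : ℝ, ∀ t ∈ Set.Icc (0 : ℝ) a, ‖S t‖ ≤ Ma)
    (B : U →L[ℝ] Y) :
    IsOpen {T : ℝ | 0 < T ∧ ∃ N : ℕ, 1 ≤ N ∧ ∃ δ ∈ Set.Ioo (0 : ℝ) 1, ∃ C : ℝ, 0 ≤ C ∧
      ∀ φ : Y,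
        ‖(ContinuousLinearMap.adjoint (S (N * T))) φ‖ ^ 2 ≤
          C * ∑ i ∈ Finset.range N,
            ‖∫ t in ((i : ℝ) * T)..(((i : ℝ) + 1) * T),
              (ContinuousLinearMap.adjoint B) ((ContinuousLinearMap.adjoint (S t)) φ)‖ ^ 2
          + δ * ‖φ‖ ^ 2} := by
  have hnorm : ∀ t : ℝ, ‖ContinuousLinearMap.adjoint (S t)‖ = ‖S t‖ := fun t =>
    ContinuousLinearMap.adjoint.norm_map (S t)
  have hAopbd : ∀ a : ℝ, ∃ Ma : ℝ, 0 ≤ Ma ∧ ∀ φ : Y, ∀ t ∈ Set.Icc (0:ℝ) a,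
      ‖ContinuousLinearMap.adjoint (S t) φ‖ ≤ Ma * ‖φ‖ := by
    intro a
    obtain ⟨Ma, hMa⟩ := hbdd a
    refine ⟨max Ma 0, le_max_right _ _, fun φ t ht => ?_⟩
    calc ‖ContinuousLinearMap.adjoint (S t) φ‖
        ≤ ‖ContinuousLinearMap.adjoint (S t)‖ * ‖φ‖ := ContinuousLinearMap.le_opNorm _ _
      _ ≤ max Ma 0 * ‖φ‖ := by
          rw [hnorm]
          exact mul_le_mul_of_nonneg_right ((hMa t ht).trans (le_max_left _ _))
            (norm_nonneg _)
  refine stmt16_aux (fun t => ContinuousLinearMap.adjoint (S t))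
    (fun t φ => (ContinuousLinearMap.adjoint B) ((ContinuousLinearMap.adjoint (S t)) φ))
    ?_ ?_ hAopbd ?_ ?_ ?_
  · intro φ
    beta_reduce
    rw [hS0, ContinuousLinearMap.adjoint_id]; rfl
  · intro s t hs ht φ
    beta_reduce
    rw [hsemi s t hs ht, ContinuousLinearMap.adjoint_comp]; rfl
  · intro s t hs ht φ
    have : ContinuousLinearMap.adjoint (S t) (ContinuousLinearMap.adjoint (S s) φ)
        = ContinuousLinearMap.adjoint (S (t + s)) φ := by
      rw [add_comm t s, hsemi s t hs ht, ContinuousLinearMap.adjoint_comp]; rfl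
    simp only [this]
  · intro φ
    exact (ContinuousLinearMap.adjoint B).continuous.comp (hcont φ)
  · intro a
    obtain ⟨Ma, hMa0, hMa⟩ := hAopbd a
    refine ⟨‖ContinuousLinearMap.adjoint B‖ * Ma, by positivity, fun φ t ht => ?_⟩
    calc ‖ContinuousLinearMap.adjoint B (ContinuousLinearMap.adjoint (S t) φ)‖
        ≤ ‖ContinuousLinearMap.adjoint B‖ * ‖ContinuousLinearMap.adjoint (S t) φ‖ :=
          ContinuousLinearMap.le_opNorm _ _
      _ ≤ ‖ContinuousLinearMap.adjoint B‖ * (Ma * ‖φ‖) :=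
          mul_le_mul_of_nonneg_left (hMa φ t ht) (norm_nonneg _)
      _ = ‖ContinuousLinearMap.adjoint B‖ * Ma * ‖φ‖ := by ring
end
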